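/- arXiv:1008.3217 — 4 statements merged into one kernel-verified Lean document; each statement's English description precedes it below -/
import Mathlib

section
/- Let m ≤ n be even natural numbers. Then γ'_s(K_{m,n}) = min(2m, n). -/
open scoped Classical

noncomputable def edgeFin {V : Type*} [Fintype V] (G : SimpleGraph V) : Finset (Sym2 V) :=
  Finset.univ.filter (· ∈ G.edgeSet)

noncomputable def closedNbhd {V : Type*} [Fintype V] (G : SimpleGraph V) (e : Sym2 V) :
    Finset (Sym2 V) :=
  (edgeFin G).filter (fun e' => ∃ v, v ∈ e ∧ v ∈ e')

def IsSEDF {V : Type*} [Fintype V] (G : SimpleGraph V) (f : Sym2 V → ℤ) : Prop :=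
  (∀ e ∈ edgeFin G, f e = 1 ∨ f e = -1) ∧
  ∀ e ∈ edgeFin G, 1 ≤ ∑ e' ∈ closedNbhd G e, f e'

noncomputable def vsum {V : Type*} [Fintype V] (G : SimpleGraph V) (f : Sym2 V → ℤ) (v : V) : ℤ :=
  ∑ e ∈ (edgeFin G).filter (fun e => v ∈ e), f e

noncomputable def gammaS {V : Type*} [Fintype V] (G : SimpleGraph V) : ℤ :=
  sInf {z : ℤ | ∃ f, IsSEDF G f ∧ z = ∑ e ∈ edgeFin G, f e}

def IsLGraph {V : Type*} [Fintype V] (m n : ℕ) (G : SimpleGraph V) : Prop :=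
  Fintype.card V = (n + 1) * (m * n + m + 1) ∧
  ∃ P : Fin (n + 1) → Finset V,
    (∀ v : V, ∃! i, v ∈ P i) ∧
    (∀ i, (P i).card = m * n + m + 1) ∧
    (∀ u ∈ P 0, ∀ v ∈ P 0, u ≠ v → G.Adj u v) ∧
    (∀ i, i ≠ 0 → ∀ u ∈ P i, ∀ v ∈ P i, ¬ G.Adj u v) ∧
    (∀ i, i ≠ 0 → ∀ v ∈ P i, ((P 0).filter (G.Adj v)).card = m) ∧
    (∀ i, i ≠ 0 → ∀ v ∈ P 0, ((P i).filter (G.Adj v)).card = m) ∧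
    (∀ i j, i ≠ 0 → j ≠ 0 → i ≠ j → ∀ u ∈ P i, ∀ v ∈ P j, ¬ G.Adj u v)

def MConnected {V : Type*} [Fintype V] (m : ℕ) (G : SimpleGraph V) : Prop :=
  m < Fintype.card V ∧
  ∀ S : Finset V, S.card < m → (G.induce ((↑S : Set V)ᶜ)).Connected

def IsElementary {V : Type*} (H : SimpleGraph V) : Prop :=
  (∀ v, (H.neighborSet v).ncard ≤ 2) ∧
  ∀ v, (H.neighborSet v).ncard = 1 → ∀ w, H.Adj v w → (H.neighborSet w).ncard = 1


namespace Stmt13Aux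
open Finset

lemma alt0 (k c : ℕ) :
    ∑ i ∈ Finset.range (2*k), (if (c + i) % 2 = 0 then (1:ℤ) else -1) = 0 := by
  induction k with
  | zero => simp
  | succ k ih =>
    have h2k : 2*(k+1) = 2*k+1+1 := by ring
    rw [h2k, Finset.sum_range_succ, Finset.sum_range_succ, ih]
    split_ifs <;> omega

lemma alt (c : ℕ) {n : ℕ} (hn : Even n) :
    ∑ b : Fin n, (if (c + (b:ℕ)) % 2 = 0 then (1:ℤ) else -1) = 0 := by
  obtain ⟨k, hk⟩ := hn
  rw [Fin.sum_univ_eq_sum_range (fun i => if (c + i) % 2 = 0 then (1:ℤ) else -1)]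
  have : n = 2*k := by omega
  rw [this, alt0]

lemma single_cnt {n : ℕ} (t : ℕ) (ht : t < n) :
    ∑ b : Fin n, (if (b : ℕ) = t then (1:ℤ) else 0) = 1 := by
  rw [Fin.sum_univ_eq_sum_range (fun i => if i = t then (1:ℤ) else 0)]
  rw [Finset.sum_ite_eq' (Finset.range n) t (fun _ => (1:ℤ))]
  simp [ht]


open Finset

variable {m n : ℕ}

def emb (m n : ℕ) (p : Fin m × Fin n) : Sym2 (Fin m ⊕ Fin n) := s(Sum.inl p.1, Sum.inr p.2)

lemma emb_inj : Function.Injective (emb m n) := by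
  rintro ⟨a,b⟩ ⟨a',b'⟩ h
  simp only [emb, Sym2.eq_iff] at h
  rcases h with ⟨h1,h2⟩|⟨h1,h2⟩ <;> simp_all

lemma edgeFin_K : edgeFin (completeBipartiteGraph (Fin m) (Fin n))
    = Finset.image (emb m n) Finset.univ := by
  ext e
  induction e with
  | _ x y =>
    simp only [edgeFin, mem_filter, mem_univ, true_and, SimpleGraph.mem_edgeSet, mem_image,
      completeBipartiteGraph_adj]
    constructor
    · intro h
      rcases x with a | b <;> rcases y with a' | b'
      · simp at h
      · exact ⟨(a, b'), rfl⟩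
      · exact ⟨(a', b), Sym2.eq_swap⟩
      · simp at h
    · rintro ⟨⟨a,b⟩, h⟩
      rw [emb, Sym2.eq_iff] at h
      rcases h with ⟨h1, h2⟩ | ⟨h1, h2⟩ <;> subst h1 <;> subst h2 <;> simp

lemma sum_edgeFin (f : Sym2 (Fin m ⊕ Fin n) → ℤ) :
    ∑ e ∈ edgeFin (completeBipartiteGraph (Fin m) (Fin n)), f e
      = ∑ p : Fin m × Fin n, f (emb m n p) := by
  rw [edgeFin_K, Finset.sum_image (fun x _ y _ h => emb_inj h)]

lemma closedNbhd_K (a : Fin m) (b : Fin n) :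
    closedNbhd (completeBipartiteGraph (Fin m) (Fin n)) (emb m n (a, b))
      = Finset.image (emb m n) (({a} ×ˢ univ) ∪ (univ ×ˢ {b})) := by
  ext e'
  constructor
  · intro h
    simp only [closedNbhd, mem_filter, edgeFin_K] at h
    obtain ⟨he, v, hv1, hv2⟩ := h
    rw [mem_image] at he ⊢
    obtain ⟨⟨a',b'⟩, -, rfl⟩ := he
    refine ⟨(a',b'), ?_, rfl⟩
    simp only [emb, Sym2.mem_iff] at hv1 hv2
    simp only [mem_union, mem_product, mem_singleton, mem_univ, and_true, true_and]
    rcases hv1 with rfl|rfl <;> rcases hv2 with h|h <;> simp_all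
  · intro h
    rw [mem_image] at h
    obtain ⟨⟨a',b'⟩, hp, rfl⟩ := h
    simp only [closedNbhd, mem_filter, edgeFin_K]
    simp only [mem_union, mem_product, mem_singleton, mem_univ, and_true, true_and] at hp
    refine ⟨mem_image_of_mem _ (mem_univ _), ?_⟩
    rcases hp with rfl|rfl
    · exact ⟨Sum.inl a', by simp [emb]⟩
    · exact ⟨Sum.inr b', by simp [emb]⟩

lemma sum_closedNbhd (f : Sym2 (Fin m ⊕ Fin n) → ℤ) (a : Fin m) (b : Fin n) :
    ∑ e' ∈ closedNbhd (completeBipartiteGraph (Fin m) (Fin n)) (emb m n (a, b)), f e'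
      = (∑ b' : Fin n, f (emb m n (a, b'))) + (∑ a' : Fin m, f (emb m n (a', b)))
        - f (emb m n (a, b)) := by
  rw [closedNbhd_K, Finset.sum_image (fun x _ y _ h => emb_inj h)]
  have hinter : (({a} ×ˢ (univ : Finset (Fin n))) ∩ ((univ : Finset (Fin m)) ×ˢ {b}))
      = {(a, b)} := by
    ext ⟨x, y⟩
    simp only [mem_inter, mem_product, mem_singleton, mem_univ, and_true, true_and,
      Prod.mk.injEq]
  have h := Finset.sum_union_inter (s₁ := {a} ×ˢ (univ : Finset (Fin n)))
    (s₂ := (univ : Finset (Fin m)) ×ˢ {b}) (f := fun p => f (emb m n p))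
  rw [hinter, Finset.sum_singleton] at h
  have h1 : ∑ p ∈ ({a} ×ˢ (univ : Finset (Fin n))), f (emb m n p)
      = ∑ b' : Fin n, f (emb m n (a, b')) := by
    rw [Finset.sum_product]; simp
  have h2 : ∑ p ∈ ((univ : Finset (Fin m)) ×ˢ ({b} : Finset (Fin n))), f (emb m n p)
      = ∑ a' : Fin m, f (emb m n (a', b)) := by
    rw [Finset.sum_product]; simp
  omega


lemma core {m n : ℕ} (hmn : m ≤ n) (hn : Even n) (g : Fin m × Fin n → ℤ)
    (hpm : ∀ p, g p = 1 ∨ g p = -1)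
    (hcond : ∀ (a : Fin m) (b : Fin n),
      1 ≤ (∑ b', g (a, b')) + (∑ a', g (a', b)) - g (a, b)) :
    min (2*(m:ℤ)) (n:ℤ) ≤ ∑ p, g p := by
  rcases Nat.eq_zero_or_pos m with hm0 | hm1
  · subst hm0
    have : ∑ p : Fin 0 × Fin n, g p = 0 := by simp
    rw [this]
    simpa using min_le_left (2*(0:ℤ)) (n:ℤ)
  · by_cases hall : ∀ a : Fin m, 2 ≤ ∑ b', g (a, b')
    · have h1 : ∑ p, g p = ∑ a : Fin m, ∑ b' : Fin n, g (a, b') := Fintype.sum_prod_type g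
      have h2 : (2*(m:ℤ)) = ∑ _a : Fin m, (2:ℤ) := by simp [mul_comm]
      calc min (2*(m:ℤ)) (n:ℤ) ≤ 2*(m:ℤ) := min_le_left _ _
        _ = ∑ _a : Fin m, (2:ℤ) := h2
        _ ≤ ∑ a : Fin m, ∑ b' : Fin n, g (a, b') :=
            Finset.sum_le_sum (fun a _ => hall a)
        _ = ∑ p, g p := h1.symm
    · push_neg at hall
      obtain ⟨a0, h0⟩ := hall
      set R : ℤ := ∑ b', g (a0, b') with hR
      have heven : Even R := by
        have h1 : Even (∑ b' : Fin n, (g (a0, b') + 1)) := by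
          apply Finset.even_sum
          intro b _
          rcases hpm (a0, b) with h | h <;> rw [h] <;> decide
        have h2 : ∑ b' : Fin n, (g (a0, b') + 1) = R + n := by
          rw [Finset.sum_add_distrib]
          simp [hR]
        rw [h2] at h1
        have h3 : Even ((n:ℤ)) := (Int.even_coe_nat n).mpr hn
        have := h1.sub h3
        simpa using this
      have hR0 : R ≤ 0 := by
        obtain ⟨k, hk⟩ := heven
        omega
      have hCb : ∀ b : Fin n, 1 + g (a0, b) - R ≤ ∑ a', g (a', b) := by
        intro b
        have := hcond a0 b
        omega
      have hsum : ∑ p, g p = ∑ b : Fin n, ∑ a' : Fin m, g (a', b) :=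
        Fintype.sum_prod_type_right g
      have hlow : (n:ℤ) + R - n * R ≤ ∑ p, g p := by
        rw [hsum]
        calc (n:ℤ) + R - n * R = ∑ b : Fin n, (1 + g (a0, b) - R) := by
              rw [Finset.sum_sub_distrib, Finset.sum_add_distrib]
              simp [hR, mul_comm]
          _ ≤ ∑ b : Fin n, ∑ a', g (a', b) := Finset.sum_le_sum (fun b _ => hCb b)
      have hn1 : (1:ℤ) ≤ n := by
        have : 1 ≤ n := le_trans hm1 hmn
        exact_mod_cast this
      calc min (2*(m:ℤ)) (n:ℤ) ≤ (n:ℤ) := min_le_right _ _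
        _ ≤ (n:ℤ) + R - n * R := by nlinarith
        _ ≤ ∑ p, g p := hlow

lemma if_or_split (P Q : Prop) [Decidable P] [Decidable Q] (h : Q → ¬P) :
    (if P ∨ Q then (1:ℤ) else -1) = (if P then 1 else -1) + 2*(if Q then 1 else 0) := by
  by_cases hP : P
  · by_cases hQ : Q
    · exact absurd hP (h hQ)
    · simp [hP, hQ]
  · by_cases hQ : Q
    · simp [hP, hQ]
    · simp [hP, hQ]

def gA (m n : ℕ) (p : Fin m × Fin n) : ℤ :=
  if ((p.1:ℕ) + (p.2:ℕ)) % 2 = 0 ∨ (p.2:ℕ) = ((p.1:ℕ) + 1) % n then 1 else -1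

lemma gA_disj {n : ℕ} (hn : Even n) (hn0 : 0 < n) (a b : ℕ) (hb : b = (a + 1) % n) :
    ¬ ((a + b) % 2 = 0) := by
  obtain ⟨t, ht⟩ := hn
  have h1 := Nat.mod_add_div (a+1) n
  obtain ⟨s, hs⟩ : ∃ s, n * ((a+1)/n) = 2*s := ⟨t * ((a+1)/n), by rw [ht]; ring⟩
  omega

lemma gA_disj2 {n : ℕ} (hn : Even n) (hn0 : 0 < n) (a b : ℕ) (hb : b = (a + 1) % n) :
    ¬ ((b + a) % 2 = 0) := by
  rw [Nat.add_comm]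
  exact gA_disj hn hn0 a b hb

lemma gA_row {m n : ℕ} (hn : Even n) (hn0 : 0 < n) (a : Fin m) :
    ∑ b : Fin n, gA m n (a, b) = 2 := by
  have hsplit : ∀ b : Fin n, gA m n (a, b) =
      (if ((a:ℕ) + (b:ℕ)) % 2 = 0 then (1:ℤ) else -1)
        + 2*(if (b:ℕ) = ((a:ℕ) + 1) % n then 1 else 0) := by
    intro b
    exact if_or_split _ _ (fun hq => gA_disj hn hn0 _ _ hq)
  rw [Finset.sum_congr rfl (fun b _ => hsplit b), Finset.sum_add_distrib, alt _ hn,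
    ← Finset.mul_sum, single_cnt _ (Nat.mod_lt _ hn0)]
  norm_num

lemma gA_col {m n : ℕ} (hm : Even m) (hn : Even n) (b : Fin n) :
    0 ≤ ∑ a : Fin m, gA m n (a, b) := by
  have hn0 : 0 < n := b.pos
  have hsplit : ∀ a : Fin m, gA m n (a, b) =
      (if ((b:ℕ) + (a:ℕ)) % 2 = 0 then (1:ℤ) else -1)
        + 2*(if (b:ℕ) = ((a:ℕ) + 1) % n then 1 else 0) := by
    intro a
    rw [gA]
    have h := if_or_split (((b:ℕ) + (a:ℕ)) % 2 = 0) ((b:ℕ) = ((a:ℕ) + 1) % n)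
      (fun hq => gA_disj2 hn hn0 _ _ hq)
    rw [Nat.add_comm (a:ℕ) (b:ℕ)]
    exact h
  rw [Finset.sum_congr rfl (fun a _ => hsplit a), Finset.sum_add_distrib, alt _ hm,
    ← Finset.mul_sum]
  have : (0:ℤ) ≤ ∑ a : Fin m, (if (b:ℕ) = ((a:ℕ) + 1) % n then (1:ℤ) else 0) :=
    Finset.sum_nonneg (fun a _ => by split <;> norm_num)
  linarith

lemma gA_total {m n : ℕ} (hn : Even n) (hmn : m ≤ n) :
    ∑ p : Fin m × Fin n, gA m n p = 2*(m:ℤ) := by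
  rcases Nat.eq_zero_or_pos m with hm0 | hm1
  · subst hm0; simp
  · have hn0 : 0 < n := lt_of_lt_of_le hm1 hmn
    rw [Fintype.sum_prod_type]
    rw [Finset.sum_congr rfl (fun a _ => gA_row hn hn0 a)]
    simp [mul_comm]

lemma gA_pm {m n : ℕ} (p : Fin m × Fin n) : gA m n p = 1 ∨ gA m n p = -1 := by
  rw [gA]; split <;> simp

lemma gA_cond {m n : ℕ} (hm : Even m) (hn : Even n) (a : Fin m) (b : Fin n) :
    1 ≤ (∑ b', gA m n (a, b')) + (∑ a', gA m n (a', b)) - gA m n (a, b) := by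
  have hn0 : 0 < n := b.pos
  rw [gA_row hn hn0 a]
  have h1 := gA_col hm hn b
  have h2 : gA m n (a, b) ≤ 1 := by rcases gA_pm (a, b) with h | h <;> omega
  omega

def gB (m n : ℕ) (p : Fin m × Fin n) : ℤ :=
  if ((p.1:ℕ) + (p.2:ℕ)) % 2 = 0 ∨
      ((p.2:ℕ) % 2 = 0 ∧ (p.1:ℕ) = 2*(((p.2:ℕ)/2) % (m/2)) + 1) then 1 else -1

lemma gB_pm {m n : ℕ} (p : Fin m × Fin n) : gB m n p = 1 ∨ gB m n p = -1 := by
  rw [gB]; split <;> simp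

lemma gB_disj {m : ℕ} (a b : ℕ) (h : b % 2 = 0 ∧ a = 2*((b/2) % (m/2)) + 1) :
    ¬ ((a + b) % 2 = 0) := by
  obtain ⟨h1, h2⟩ := h
  omega

lemma gB_col {m n : ℕ} (hm2 : 2 ≤ m) (hm : Even m) (b : Fin n) :
    ∑ a : Fin m, gB m n (a, b) = if (b:ℕ) % 2 = 0 then 2 else 0 := by
  have hsplit : ∀ a : Fin m, gB m n (a, b) =
      (if ((b:ℕ) + (a:ℕ)) % 2 = 0 then (1:ℤ) else -1)
        + 2*(if ((b:ℕ) % 2 = 0 ∧ (a:ℕ) = 2*(((b:ℕ)/2) % (m/2)) + 1) then 1 else 0) := by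
    intro a
    rw [gB]
    have h := if_or_split (((b:ℕ) + (a:ℕ)) % 2 = 0)
      ((b:ℕ) % 2 = 0 ∧ (a:ℕ) = 2*(((b:ℕ)/2) % (m/2)) + 1)
      (fun hq => by rw [Nat.add_comm]; exact gB_disj _ _ hq)
    rw [Nat.add_comm (a:ℕ) (b:ℕ)]
    exact h
  rw [Finset.sum_congr rfl (fun a _ => hsplit a), Finset.sum_add_distrib, alt _ hm,
    ← Finset.mul_sum]
  by_cases hb : (b:ℕ) % 2 = 0
  · have heq : ∀ a : Fin m,
        (if ((b:ℕ) % 2 = 0 ∧ (a:ℕ) = 2*(((b:ℕ)/2) % (m/2)) + 1) then (1:ℤ) else 0)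
          = (if (a:ℕ) = 2*(((b:ℕ)/2) % (m/2)) + 1 then (1:ℤ) else 0) := by
      intro a
      simp [hb]
    have ht : 2*(((b:ℕ)/2) % (m/2)) + 1 < m := by
      have := Nat.mod_lt ((b:ℕ)/2) (y := m/2) (by omega)
      obtain ⟨t, ht'⟩ := hm
      omega
    rw [Finset.sum_congr rfl (fun a _ => heq a), single_cnt _ ht]
    simp [hb]
  · have heq : ∀ a : Fin m,
        (if ((b:ℕ) % 2 = 0 ∧ (a:ℕ) = 2*(((b:ℕ)/2) % (m/2)) + 1) then (1:ℤ) else 0)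
          = 0 := by
      intro a
      simp [hb]
    rw [Finset.sum_congr rfl (fun a _ => heq a)]
    simp [hb]

lemma gB_row_split {m n : ℕ} (a : Fin m) (hn : Even n) :
    ∑ b : Fin n, gB m n (a, b)
      = 2 * ∑ b : Fin n,
          (if ((b:ℕ) % 2 = 0 ∧ (a:ℕ) = 2*(((b:ℕ)/2) % (m/2)) + 1) then (1:ℤ) else 0) := by
  have hsplit : ∀ b : Fin n, gB m n (a, b) =
      (if ((a:ℕ) + (b:ℕ)) % 2 = 0 then (1:ℤ) else -1)
        + 2*(if ((b:ℕ) % 2 = 0 ∧ (a:ℕ) = 2*(((b:ℕ)/2) % (m/2)) + 1) then 1 else 0) := by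
    intro b
    exact if_or_split _ _ (fun hq => gB_disj _ _ hq)
  rw [Finset.sum_congr rfl (fun b _ => hsplit b), Finset.sum_add_distrib, alt _ hn,
    ← Finset.mul_sum]
  ring

lemma gB_row_nonneg {m n : ℕ} (a : Fin m) (hn : Even n) :
    0 ≤ ∑ b : Fin n, gB m n (a, b) := by
  rw [gB_row_split a hn]
  have : (0:ℤ) ≤ ∑ b : Fin n,
      (if ((b:ℕ) % 2 = 0 ∧ (a:ℕ) = 2*(((b:ℕ)/2) % (m/2)) + 1) then (1:ℤ) else 0) :=
    Finset.sum_nonneg (fun b _ => by split <;> norm_num)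
  linarith

lemma gB_row_odd {m n : ℕ} (hmn : m ≤ n) (hm : Even m) (hn : Even n) (a : Fin m)
    (ha : (a:ℕ) % 2 = 1) :
    2 ≤ ∑ b : Fin n, gB m n (a, b) := by
  rw [gB_row_split a hn]
  obtain ⟨t, ht⟩ := hm
  have hb0lt : 2*((a:ℕ)/2) < n := by
    have := a.isLt
    omega
  set b0 : Fin n := ⟨2*((a:ℕ)/2), hb0lt⟩ with hb0
  have hval : (if ((b0:ℕ) % 2 = 0 ∧ (a:ℕ) = 2*(((b0:ℕ)/2) % (m/2)) + 1) then (1:ℤ) else 0)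
      = 1 := by
    have h1 : (b0:ℕ) = 2*((a:ℕ)/2) := rfl
    have h2 : (b0:ℕ) % 2 = 0 := by omega
    have h3 : (b0:ℕ)/2 = (a:ℕ)/2 := by omega
    have h4 : ((a:ℕ)/2) % (m/2) = (a:ℕ)/2 := by
      apply Nat.mod_eq_of_lt
      have := a.isLt
      omega
    rw [if_pos]
    refine ⟨h2, ?_⟩
    rw [h3, h4]
    omega
  have hge : (1:ℤ) ≤ ∑ b : Fin n,
      (if ((b:ℕ) % 2 = 0 ∧ (a:ℕ) = 2*(((b:ℕ)/2) % (m/2)) + 1) then (1:ℤ) else 0) := by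
    have hle := Finset.single_le_sum (f := fun b : Fin n =>
      (if ((b:ℕ) % 2 = 0 ∧ (a:ℕ) = 2*(((b:ℕ)/2) % (m/2)) + 1) then (1:ℤ) else 0))
      (fun b _ => by split <;> norm_num) (Finset.mem_univ b0)
    rw [hval] at hle
    exact hle
  linarith

lemma gB_total {m n : ℕ} (hm2 : 2 ≤ m) (hm : Even m) (hn : Even n) :
    ∑ p : Fin m × Fin n, gB m n p = (n:ℤ) := by
  rw [Fintype.sum_prod_type_right]
  rw [Finset.sum_congr rfl (fun b _ => gB_col hm2 hm b)]
  have heq : ∀ b : Fin n, (if (b:ℕ) % 2 = 0 then (2:ℤ) else 0)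
      = (if (0 + (b:ℕ)) % 2 = 0 then (1:ℤ) else -1) + 1 := by
    intro b
    rcases Nat.mod_two_eq_zero_or_one (b:ℕ) with h | h <;> simp [h, Nat.zero_add]
  rw [Finset.sum_congr rfl (fun b _ => heq b), Finset.sum_add_distrib, alt _ hn]
  simp

lemma gB_cond {m n : ℕ} (hmn : m ≤ n) (hm2 : 2 ≤ m) (hm : Even m) (hn : Even n)
    (a : Fin m) (b : Fin n) :
    1 ≤ (∑ b', gB m n (a, b')) + (∑ a', gB m n (a', b)) - gB m n (a, b) := by
  have hcol := gB_col hm2 hm (n := n) b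
  have hrow0 := gB_row_nonneg a hn
  have hcol0 : (0:ℤ) ≤ ∑ a', gB m n (a', b) := by rw [hcol]; split <;> norm_num
  rw [gB]
  split
  · rename_i h
    have h2 : 2 ≤ (∑ b', gB m n (a, b')) + (∑ a', gB m n (a', b)) := by
      rcases h with h | h
      · simp only at h
        by_cases hb : (b:ℕ) % 2 = 0
        · have : (∑ a', gB m n (a', b)) = 2 := by rw [hcol, if_pos hb]
          omega
        · have ha : (a:ℕ) % 2 = 1 := by omega
          have := gB_row_odd hmn hm hn a ha
          omega
      · simp only at h
        have ha : (a:ℕ) % 2 = 1 := by omega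
        have := gB_row_odd hmn hm hn a ha
        omega
    omega
  · omega


def extend {m n : ℕ} (g : Fin m × Fin n → ℤ) : Sym2 (Fin m ⊕ Fin n) → ℤ :=
  Sym2.lift ⟨fun x y =>
    match x, y with
    | Sum.inl a, Sum.inr b => g (a, b)
    | Sum.inr b, Sum.inl a => g (a, b)
    | _, _ => 1,
    by rintro (a|b) (a'|b') <;> rfl⟩

lemma extend_emb {m n : ℕ} (g : Fin m × Fin n → ℤ) (p : Fin m × Fin n) :
    extend g (emb m n p) = g p := by
  obtain ⟨a, b⟩ := p
  rfl

lemma sedf_extend {m n : ℕ} (g : Fin m × Fin n → ℤ)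
    (hpm : ∀ p, g p = 1 ∨ g p = -1)
    (hcond : ∀ (a : Fin m) (b : Fin n),
      1 ≤ (∑ b', g (a, b')) + (∑ a', g (a', b)) - g (a, b)) :
    IsSEDF (completeBipartiteGraph (Fin m) (Fin n)) (extend g) := by
  constructor
  · intro e he
    rw [edgeFin_K, Finset.mem_image] at he
    obtain ⟨p, -, rfl⟩ := he
    rw [extend_emb]
    exact hpm p
  · intro e he
    rw [edgeFin_K, Finset.mem_image] at he
    obtain ⟨⟨a, b⟩, -, rfl⟩ := he
    rw [sum_closedNbhd, extend_emb,
      Finset.sum_congr rfl (fun b' _ => extend_emb g (a, b')),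
      Finset.sum_congr rfl (fun a' _ => extend_emb g (a', b))]
    exact hcond a b

lemma sum_extend {m n : ℕ} (g : Fin m × Fin n → ℤ) :
    ∑ e ∈ edgeFin (completeBipartiteGraph (Fin m) (Fin n)), extend g e
      = ∑ p : Fin m × Fin n, g p := by
  rw [sum_edgeFin]
  exact Finset.sum_congr rfl (fun p _ => extend_emb g p)

end Stmt13Aux

theorem stmt13 (m n : ℕ) (hmn : m ≤ n) (hm : Even m) (hn : Even n) :
    gammaS (completeBipartiteGraph (Fin m) (Fin n)) = min (2 * (m : ℤ)) (n : ℤ) := by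
  classical
  open Stmt13Aux in
  set S : Set ℤ := {z : ℤ | ∃ f, IsSEDF (completeBipartiteGraph (Fin m) (Fin n)) f ∧
    z = ∑ e ∈ edgeFin (completeBipartiteGraph (Fin m) (Fin n)), f e} with hSdef
  have hgamma : gammaS (completeBipartiteGraph (Fin m) (Fin n)) = sInf S := rfl
  set μ : ℤ := min (2 * (m : ℤ)) (n : ℤ) with hμ
  have hlb : ∀ z ∈ S, μ ≤ z := by
    rintro z ⟨f, ⟨hf1, hf2⟩, rfl⟩
    set g : Fin m × Fin n → ℤ := fun p => f (emb m n p) with hg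
    have hpm : ∀ p, g p = 1 ∨ g p = -1 := by
      intro p
      apply hf1
      rw [edgeFin_K]
      exact Finset.mem_image_of_mem _ (Finset.mem_univ p)
    have hcond : ∀ (a : Fin m) (b : Fin n),
        1 ≤ (∑ b', g (a, b')) + (∑ a', g (a', b)) - g (a, b) := by
      intro a b
      have h := hf2 (emb m n (a, b)) (by
        rw [edgeFin_K]
        exact Finset.mem_image_of_mem _ (Finset.mem_univ (a, b)))
      rw [sum_closedNbhd] at h
      exact h
    rw [sum_edgeFin]
    exact core hmn hn g hpm hcond
  have hmem : μ ∈ S := by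
    by_cases hc : 2 * m ≤ n
    · have hμ2 : μ = 2 * (m : ℤ) := min_eq_left (by exact_mod_cast hc)
      refine ⟨extend (gA m n), sedf_extend _ gA_pm (fun a b => gA_cond hm hn a b), ?_⟩
      rw [sum_extend, gA_total hn hmn, hμ2]
    · push_neg at hc
      have hm2 : 2 ≤ m := by
        obtain ⟨t, ht⟩ := hm
        omega
      have hμ2 : μ = (n : ℤ) := min_eq_right (by exact_mod_cast Nat.le_of_lt hc)
      refine ⟨extend (gB m n), sedf_extend _ gB_pm
        (fun a b => gB_cond hmn hm2 hm hn a b), ?_⟩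
      rw [sum_extend, gB_total hm2 hm hn, hμ2]
  rw [hgamma]
  exact le_antisymm (csInf_le ⟨μ, fun z hz => hlb z hz⟩ hmem) (le_csInf ⟨μ, hmem⟩ hlb)
end

section
/- Let m ≤ n be odd natural numbers. Then γ'_s(K_{m,n}) = min(2m − 1, n). -/
open scoped Classical

/- ## Auxiliary counting lemmas -/

namespace Stmt14Aux

open Finset

lemma L0 (M : ℕ) (P : ℕ → Prop) [DecidablePred P] :
    ∑ i ∈ range M, (if P i then (1:ℤ) else -1) =
      2 * ((range M).filter P).card - M := by
  rw [Finset.sum_ite, Finset.sum_const, Finset.sum_const]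
  have h := Finset.card_filter_add_card_filter_not (s := range M) (p := P)
  rw [Finset.card_range] at h
  have h3 : ((range M).filter P).card ≤ M := by omega
  have h2 : ((range M).filter (fun a => ¬ P a)).card = M - ((range M).filter P).card := by
    omega
  rw [h2]
  simp only [smul_eq_mul, mul_one, mul_neg_one, nsmul_eq_mul]
  push_cast [Nat.cast_sub h3]
  ring

lemma L1 (M A : ℕ) (hA : A ≤ M) :
    ∑ i ∈ range M, (if i < A then (1:ℤ) else -1) = 2 * A - M := by
  rw [L0]
  have : (range M).filter (· < A) = range A := by ext x; simp; omega
  rw [this, Finset.card_range]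

lemma L2 (M A : ℕ) (hA : A ≤ M) :
    ∑ i ∈ range M, (if A ≤ i then (1:ℤ) else -1) = M - 2 * A := by
  rw [L0]
  have : ((range M).filter (A ≤ ·)).card = M - A := by
    have : (range M).filter (A ≤ ·) = Finset.Ico A M := by ext x; simp; omega
    rw [this, Nat.card_Ico]
  rw [this]
  push_cast [Nat.cast_sub hA]
  ring

lemma L5 (M K r : ℕ) (hK : K ≤ r) (hr : r < M) :
    ∑ i ∈ range M, (if i < K ∨ i = r then (1:ℤ) else -1) = 2 * (K + 1) - M := by
  rw [L0]
  have : (range M).filter (fun i => i < K ∨ i = r) = insert r (range K) := by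
    ext x; simp; omega
  rw [this, Finset.card_insert_of_notMem (by simp; omega), Finset.card_range]
  push_cast; ring

lemma L3 (m c : ℕ) (hm : 0 < m) (F : ℕ → ℤ) :
    ∑ i ∈ range m, F ((i + c) % m) = ∑ i ∈ range m, F i := by
  haveI : NeZero m := ⟨hm.ne'⟩
  have h1 : ∑ i ∈ range m, F ((i + c) % m) = ∑ i : Fin m, F ((i.val + c) % m) :=
    (Fin.sum_univ_eq_sum_range (fun i => F ((i + c) % m)) m).symm
  have h2 : ∑ i ∈ range m, F i = ∑ i : Fin m, F i.val :=
    (Fin.sum_univ_eq_sum_range F m).symm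
  rw [h1, h2]
  set cf : Fin m := ⟨c % m, Nat.mod_lt _ hm⟩ with hcf
  have key : ∀ i : Fin m, F ((i.val + c) % m) = F ((i + cf).val) := by
    intro i
    congr 1
    rw [Fin.val_add]
    simp only [hcf]
    conv_lhs => rw [Nat.add_mod]
    conv_rhs => rw [Nat.add_mod]
    rw [Nat.mod_mod_of_dvd _ (dvd_refl m), Nat.mod_eq_of_lt i.isLt]
  simp_rw [key]
  exact Equiv.sum_comp (Equiv.addRight cf) (fun i => F i.val)

lemma L4 (A B : ℕ) (F : ℕ → ℤ) :
    ∑ i ∈ range (A + B), F i = ∑ i ∈ range A, F i + ∑ i ∈ range B, F (A + i) := by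
  induction B with
  | zero => simp
  | succ b ih => rw [← Nat.add_assoc, Finset.sum_range_succ, ih, Finset.sum_range_succ]; ring

lemma Lpair (s : ℕ) (x y : ℤ) :
    ∑ i ∈ range (2 * s), (if i % 2 = 0 then x else y) = s * (x + y) := by
  induction s with
  | zero => simp
  | succ t ih =>
      have : 2 * (t + 1) = 2 * t + 1 + 1 := by ring
      rw [this, Finset.sum_range_succ, Finset.sum_range_succ, ih]
      have h1 : (2 * t) % 2 = 0 := by omega
      have h2 : (2 * t + 1) % 2 = 1 := by omega
      rw [h1, h2]; simp; ring

lemma L6 (a c : ℕ) (hc : c < a) :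
    (range (2 * a)).filter (fun d => d % a = c) = {c, c + a} := by
  ext d
  simp only [mem_filter, mem_range, mem_insert, mem_singleton]
  constructor
  · rintro ⟨hd, hmod⟩
    rcases Nat.lt_or_ge d a with h | h
    · left; rw [Nat.mod_eq_of_lt h] at hmod; omega
    · right
      have : d % a = (d - a) % a := by
        conv_lhs => rw [show d = d - a + a by omega]
        rw [Nat.add_mod_right]
      rw [this, Nat.mod_eq_of_lt (by omega)] at hmod
      omega
  · rintro (rfl | rfl)
    · exact ⟨by omega, Nat.mod_eq_of_lt hc⟩
    · exact ⟨by omega, by rw [Nat.add_mod_right, Nat.mod_eq_of_lt hc]⟩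

/-- Lower bound, matrix form. -/
lemma matrix_lower (m n : ℕ) (hm : Odd m) (hn : Odd n) (g : ℕ → ℕ → ℤ)
    (hval : ∀ i < m, ∀ j < n, g i j = 1 ∨ g i j = -1)
    (hcond : ∀ i < m, ∀ j < n,
      1 ≤ (∑ j' ∈ range n, g i j') + (∑ i' ∈ range m, g i' j) - g i j) :
    min (2 * (m:ℤ) - 1) (n:ℤ) ≤ ∑ i ∈ range m, ∑ j ∈ range n, g i j := by
  have hm1 : 1 ≤ m := hm.pos
  have hn1 : 1 ≤ n := hn.pos
  by_cases hc : ∀ j < n, 1 ≤ ∑ i' ∈ range m, g i' j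
  · have h1 : (n:ℤ) ≤ ∑ j ∈ range n, ∑ i ∈ range m, g i j := by
      calc (n:ℤ) = ∑ _j ∈ range n, (1:ℤ) := by simp
        _ ≤ _ := Finset.sum_le_sum (fun j hj => hc j (mem_range.mp hj))
    rw [Finset.sum_comm]
    exact le_trans (min_le_right _ _) h1
  · push_neg at hc
    obtain ⟨j0, hj0n, hj0⟩ := hc
    set C : ℤ := ∑ i' ∈ range m, g i' j0 with hC
    have hCodd : C % 2 = 1 := by
      have h5 : C % 2 = (∑ i' ∈ range m, g i' j0 % 2) % 2 := Finset.sum_int_mod _ _ _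
      have h6 : ∀ i' ∈ range m, g i' j0 % 2 = 1 := by
        intro i' hi'
        rcases hval i' (mem_range.mp hi') j0 hj0n with h | h <;> rw [h] <;> decide
      rw [Finset.sum_congr rfl h6, Finset.sum_const, Finset.card_range] at h5
      simp only [nsmul_eq_mul, mul_one] at h5
      obtain ⟨w, hw⟩ := hm
      subst hw
      push_cast at h5
      omega
    have hCneg : C ≤ -1 := by omega
    have hrow : ∀ i < m, 1 + g i j0 - C ≤ ∑ j' ∈ range n, g i j' := by
      intro i hi
      have := hcond i hi j0 hj0n
      rw [← hC] at this
      linarith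
    have h2 : ∑ i ∈ range m, (1 + g i j0 - C) ≤ ∑ i ∈ range m, ∑ j ∈ range n, g i j :=
      Finset.sum_le_sum (fun i hi => hrow i (mem_range.mp hi))
    have h3 : ∑ i ∈ range m, (1 + g i j0 - C) = (m:ℤ) + C - m * C := by
      rw [Finset.sum_sub_distrib, Finset.sum_add_distrib, Finset.sum_const, Finset.sum_const,
        Finset.card_range, ← hC]
      ring
    have h4 : (2 * (m:ℤ) - 1) ≤ (m:ℤ) + C - m * C := by
      nlinarith [hCneg, (by exact_mod_cast hm1 : (1:ℤ) ≤ m)]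
    calc min (2 * (m:ℤ) - 1) (n:ℤ) ≤ 2 * (m:ℤ) - 1 := min_le_left _ _
      _ ≤ (m:ℤ) + C - m * C := h4
      _ = ∑ i ∈ range m, (1 + g i j0 - C) := h3.symm
      _ ≤ _ := h2

/-- Construction A : works for all odd m ≤ n, total n. -/
lemma matrix_upper_A (m n : ℕ) (hmn : m ≤ n) (hm : Odd m) (hn : Odd n) :
    ∃ g : ℕ → ℕ → ℤ,
      (∀ i < m, ∀ j < n, g i j = 1 ∨ g i j = -1) ∧
      (∀ i < m, ∀ j < n,
        1 ≤ (∑ j' ∈ range n, g i j') + (∑ i' ∈ range m, g i' j) - g i j) ∧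
      (∑ i ∈ range m, ∑ j ∈ range n, g i j) = (n:ℤ) := by
  have hm1 : 1 ≤ m := hm.pos
  set a : ℕ := (m + 1) / 2 with ha
  have ha2 : 2 * a = m + 1 := by obtain ⟨w, hw⟩ := hm; omega
  have ham : a ≤ m := by omega
  have ha1 : 1 ≤ a := by omega
  set s : ℕ := (n - m) / 2 with hs
  have hns : n = m + 2 * s := by
    obtain ⟨w, hw⟩ := hm; obtain ⟨v, hv⟩ := hn; omega
  set bA : ℕ → ℤ := fun i => if i < a then 1 else -1 with hbA
  set bA' : ℕ → ℤ := fun i => if a - 1 ≤ i then 1 else -1 with hbA'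
  set g : ℕ → ℕ → ℤ := fun i j => if j < m then bA ((i + j) % m)
      else if (j - m) % 2 = 0 then bA i else bA' i with hg
  have hC : ∀ j < n, (∑ i' ∈ range m, g i' j) = 1 := by
    intro j hj
    rcases Nat.lt_or_ge j m with h | h
    · have : ∀ i' ∈ range m, g i' j = bA ((i' + j) % m) := by
        intro i' _; simp only [hg, if_pos h]
      rw [Finset.sum_congr rfl this, L3 m j hm1 bA, hbA, L1 m a ham]
      have : (2:ℤ) * a = m + 1 := by exact_mod_cast congrArg (Nat.cast : ℕ → ℤ) ha2
      omega
    · by_cases h2 : (j - m) % 2 = 0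
      · have : ∀ i' ∈ range m, g i' j = bA i' := by
          intro i' _; simp only [hg, if_neg (by omega : ¬ j < m), if_pos h2]
        rw [Finset.sum_congr rfl this, hbA, L1 m a ham]
        have : (2:ℤ) * a = m + 1 := by exact_mod_cast congrArg (Nat.cast : ℕ → ℤ) ha2
        omega
      · have : ∀ i' ∈ range m, g i' j = bA' i' := by
          intro i' _; simp only [hg, if_neg (by omega : ¬ j < m), if_neg h2]
        rw [Finset.sum_congr rfl this, hbA', L2 m (a - 1) (by omega)]
        have h3 : ((a:ℤ) - 1) = ((a - 1 : ℕ) : ℤ) := by push_cast [Nat.cast_sub ha1]; ring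
        have : (2:ℤ) * a = m + 1 := by exact_mod_cast congrArg (Nat.cast : ℕ → ℤ) ha2
        omega
  have hR : ∀ i < m, (1:ℤ) ≤ ∑ j' ∈ range n, g i j' := by
    intro i hi
    have hsplit : ∑ j' ∈ range n, g i j'
        = ∑ j' ∈ range m, g i j' + ∑ d ∈ range (2 * s), g i (m + d) := by
      rw [hns, L4]
    have hpart1 : ∑ j' ∈ range m, g i j' = 1 := by
      have e1 : ∀ j' ∈ range m, g i j' = bA ((j' + i) % m) := by
        intro j' hj'
        simp only [hg, if_pos (mem_range.mp hj')]
        rw [Nat.add_comm]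
      rw [Finset.sum_congr rfl e1, L3 m i hm1 bA, hbA, L1 m a ham]
      have : (2:ℤ) * a = m + 1 := by exact_mod_cast congrArg (Nat.cast : ℕ → ℤ) ha2
      omega
    have hpart2 : ∑ d ∈ range (2 * s), g i (m + d) = s * (bA i + bA' i) := by
      have e2 : ∀ d ∈ range (2 * s), g i (m + d)
          = if d % 2 = 0 then bA i else bA' i := by
        intro d _
        simp only [hg, if_neg (by omega : ¬ m + d < m)]
        rw [show m + d - m = d by omega]
      rw [Finset.sum_congr rfl e2, Lpair]
    have hnonneg : 0 ≤ bA i + bA' i := by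
      simp only [hbA, hbA']
      split_ifs <;> omega
    rw [hsplit, hpart1, hpart2]
    have : 0 ≤ (s:ℤ) * (bA i + bA' i) := mul_nonneg (by positivity) hnonneg
    linarith
  have hval : ∀ i < m, ∀ j < n, g i j = 1 ∨ g i j = -1 := by
    intro i _ j _
    simp only [hg, hbA, hbA']
    split_ifs <;> simp
  refine ⟨g, hval, ?_, ?_⟩
  · intro i hi j hj
    have h1 := hR i hi
    have h2 := hC j hj
    have h3 : g i j ≤ 1 := by rcases hval i hi j hj with h | h <;> omega
    omega
  · rw [Finset.sum_comm]
    have : ∀ j ∈ range n, (∑ i ∈ range m, g i j) = 1 := by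
      intro j hj; exact hC j (mem_range.mp hj)
    rw [Finset.sum_congr rfl this]
    simp

/-- Construction B : case n ≥ 2m+1, total 2m-1. -/
lemma matrix_upper_B (m n : ℕ) (hm : Odd m) (hn : Odd n)
    (hbig : 2 * m + 1 ≤ n) :
    ∃ g : ℕ → ℕ → ℤ,
      (∀ i < m, ∀ j < n, g i j = 1 ∨ g i j = -1) ∧
      (∀ i < m, ∀ j < n,
        1 ≤ (∑ j' ∈ range n, g i j') + (∑ i' ∈ range m, g i' j) - g i j) ∧
      (∑ i ∈ range m, ∑ j ∈ range n, g i j) = 2 * (m:ℤ) - 1 := by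
  have hm1 : 1 ≤ m := hm.pos
  set a : ℕ := (m + 1) / 2 with ha
  have ha2 : 2 * a = m + 1 := by obtain ⟨w, hw⟩ := hm; omega
  set k : ℕ := (m - 1) / 2 with hk
  have hk2 : 2 * k = m - 1 := by obtain ⟨w, hw⟩ := hm; omega
  have hka : k + a = m := by omega
  set t : ℕ := (n - (2 * m - 1)) / 2 with ht
  have htn : n = 2 * m - 1 + 2 * t := by
    obtain ⟨w, hw⟩ := hm; obtain ⟨v, hv⟩ := hn; omega
  have ht1 : 1 ≤ t := by omega
  set y : ℕ := n - t - (m + 1) with hy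
  have hyval : y = m + t - 2 := by omega
  have hnsplit : n = t + ((m + 1) + y) := by omega
  set g : ℕ → ℕ → ℤ := fun i j =>
    if j < t then (if i < k then 1 else -1)
    else if j < t + (m + 1) then (if i < k ∨ i = k + (j - t) % a then 1 else -1)
    else (if k ≤ i then 1 else -1) with hg
  have hval : ∀ i < m, ∀ j < n, g i j = 1 ∨ g i j = -1 := by
    intro i _ j _; simp only [hg]; split_ifs <;> simp
  have hC : ∀ j < n, (∑ i' ∈ range m, g i' j) = if j < t then -1 else 1 := by
    intro j hj
    rcases Nat.lt_or_ge j t with h | h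
    · rw [if_pos h]
      have e : ∀ i' ∈ range m, g i' j = if i' < k then (1:ℤ) else -1 := by
        intro i' _; simp only [hg, if_pos h]
      rw [Finset.sum_congr rfl e, L1 m k (by omega)]
      have : (k:ℤ) * 2 = m - 1 := by
        have := congrArg (Nat.cast : ℕ → ℤ) hk2; push_cast [Nat.cast_sub hm1] at this; omega
      omega
    · rw [if_neg (by omega)]
      rcases Nat.lt_or_ge j (t + (m + 1)) with h2 | h2
      · have e : ∀ i' ∈ range m, g i' j
            = if i' < k ∨ i' = k + (j - t) % a then (1:ℤ) else -1 := by
          intro i' _; simp only [hg, if_neg (by omega : ¬ j < t), if_pos h2]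
        have hra : (j - t) % a < a := Nat.mod_lt _ (by omega)
        rw [Finset.sum_congr rfl e, L5 m k (k + (j - t) % a) (by omega) (by omega)]
        have : (k:ℤ) * 2 = m - 1 := by
          have := congrArg (Nat.cast : ℕ → ℤ) hk2; push_cast [Nat.cast_sub hm1] at this; omega
        omega
      · have e : ∀ i' ∈ range m, g i' j = if k ≤ i' then (1:ℤ) else -1 := by
          intro i' _
          simp only [hg, if_neg (by omega : ¬ j < t), if_neg (by omega : ¬ j < t + (m+1))]
        rw [Finset.sum_congr rfl e, L2 m k (by omega)]
        have : (k:ℤ) * 2 = m - 1 := by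
          have := congrArg (Nat.cast : ℕ → ℤ) hk2; push_cast [Nat.cast_sub hm1] at this; omega
        omega
  have hR : ∀ i < m, (∑ j' ∈ range n, g i j') = if i < k then 3 else 1 := by
    intro i hi
    have hsplit : ∑ j' ∈ range n, g i j'
        = ∑ j' ∈ range t, g i j'
          + (∑ d ∈ range (m + 1), g i (t + d) + ∑ e ∈ range y, g i (t + ((m + 1) + e))) := by
      conv_lhs => rw [hnsplit, L4]
      rw [L4 (m+1) y (fun d => g i (t + d))]
    have hpart1 : ∑ j' ∈ range t, g i j' = t * (if i < k then (1:ℤ) else -1) := by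
      have e : ∀ j' ∈ range t, g i j' = if i < k then (1:ℤ) else -1 := by
        intro j' hj'; simp only [hg, if_pos (mem_range.mp hj')]
      rw [Finset.sum_congr rfl e, Finset.sum_const, Finset.card_range, nsmul_eq_mul]
    have hpart3 : ∑ e ∈ range y, g i (t + ((m + 1) + e))
        = y * (if k ≤ i then (1:ℤ) else -1) := by
      have e : ∀ e' ∈ range y, g i (t + ((m + 1) + e')) = if k ≤ i then (1:ℤ) else -1 := by
        intro e' _
        simp only [hg, if_neg (by omega : ¬ t + ((m+1) + e') < t),
          if_neg (by omega : ¬ t + ((m+1) + e') < t + (m+1))]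
      rw [Finset.sum_congr rfl e, Finset.sum_const, Finset.card_range, nsmul_eq_mul]
    have hpart2 : ∑ d ∈ range (m + 1), g i (t + d)
        = if i < k then (m:ℤ) + 1 else 3 - m := by
      have e : ∀ d ∈ range (m + 1), g i (t + d)
          = if i < k ∨ i = k + d % a then (1:ℤ) else -1 := by
        intro d hd
        simp only [hg, if_neg (by omega : ¬ t + d < t), if_pos (by
          have := mem_range.mp hd; omega : t + d < t + (m + 1))]
        rw [show t + d - t = d by omega]
      rw [Finset.sum_congr rfl e]
      rcases Nat.lt_or_ge i k with h | h
      · rw [if_pos h]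
        have e2 : ∀ d ∈ range (m + 1), (if i < k ∨ i = k + d % a then (1:ℤ) else -1) = 1 := by
          intro d _; rw [if_pos (Or.inl h)]
        rw [Finset.sum_congr rfl e2, Finset.sum_const, Finset.card_range, nsmul_eq_mul]
        push_cast; ring
      · rw [if_neg (by omega)]
        have e2 : ∀ d ∈ range (m + 1), (if i < k ∨ i = k + d % a then (1:ℤ) else -1)
            = if d % a = i - k then 1 else -1 := by
          intro d _
          congr 1
          simp only [eq_iff_iff]
          constructor
          · rintro (h' | h'); · omega
            · have : d % a < a := Nat.mod_lt _ (by omega)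
              omega
          · intro h'; right; omega
        rw [Finset.sum_congr rfl e2]
        rw [show m + 1 = 2 * a by omega, L0]
        rw [L6 a (i - k) (by omega)]
        rw [show ({i - k, i - k + a} : Finset ℕ).card = 2 by
          rw [Finset.card_insert_of_notMem (by simp; omega), Finset.card_singleton]]
        have : (2:ℤ) * a = m + 1 := by exact_mod_cast congrArg (Nat.cast : ℕ → ℤ) ha2
        omega
    rw [hsplit, hpart1, hpart2, hpart3]
    have hyz : (y:ℤ) = m + t - 2 := by
      have := congrArg (Nat.cast : ℕ → ℤ) hyval
      push_cast [Nat.cast_sub (by omega : 2 ≤ m + t)] at this; omega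
    rcases Nat.lt_or_ge i k with h | h
    · rw [if_pos h, if_pos h, if_neg (by omega), if_pos h]
      rw [hyz]; ring
    · rw [if_neg (by omega), if_neg (by omega), if_pos h, if_neg (by omega)]
      rw [hyz]; ring
  refine ⟨g, hval, ?_, ?_⟩
  · intro i hi j hj
    have h1 := hR i hi
    have h2 := hC j hj
    rcases Nat.lt_or_ge j t with h | h
    · rw [if_pos h] at h2
      rcases Nat.lt_or_ge i k with h' | h'
      · rw [if_pos h'] at h1
        have : g i j = 1 := by simp only [hg, if_pos h, if_pos h']
        omega
      · rw [if_neg (by omega)] at h1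
        have : g i j = -1 := by simp only [hg, if_pos h, if_neg (by omega : ¬ i < k)]
        omega
    · rw [if_neg (by omega)] at h2
      have h3 : g i j ≤ 1 := by rcases hval i hi j hj with h' | h' <;> omega
      have h4 : (1:ℤ) ≤ ∑ j' ∈ range n, g i j' := by rw [h1]; split_ifs <;> omega
      omega
  · have : ∀ i ∈ range m, (∑ j ∈ range n, g i j)
        = (if i < k then (1:ℤ) else -1) + 2 := by
      intro i hi
      rw [hR i (mem_range.mp hi)]; split_ifs <;> ring
    rw [Finset.sum_congr rfl this, Finset.sum_add_distrib, L1 m k (by omega),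
      Finset.sum_const, Finset.card_range, nsmul_eq_mul]
    have : (k:ℤ) * 2 = m - 1 := by
      have := congrArg (Nat.cast : ℕ → ℤ) hk2; push_cast [Nat.cast_sub hm1] at this; omega
    omega

/- ## Bridge between the graph and the matrix formulation -/

variable {m n : ℕ}

def emb (m n : ℕ) (p : Fin m × Fin n) : Sym2 (Fin m ⊕ Fin n) :=
  s(Sum.inl p.1, Sum.inr p.2)

lemma emb_inj : Function.Injective (emb m n) := by
  rintro ⟨i, j⟩ ⟨i', j'⟩ h
  simp only [emb, Sym2.eq_iff] at h
  rcases h with ⟨h1, h2⟩ | ⟨h1, h2⟩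
  · simp only [Sum.inl.injEq, Sum.inr.injEq] at h1 h2
    simp [h1, h2]
  · exact absurd h1 (by simp)

lemma edgeFin_eq :
    edgeFin (completeBipartiteGraph (Fin m) (Fin n)) = Finset.univ.image (emb m n) := by
  ext e
  simp only [edgeFin, mem_filter, mem_univ, true_and, mem_image]
  constructor
  · intro he
    induction e using Sym2.ind with
    | _ u v =>
      rw [SimpleGraph.mem_edgeSet] at he
      rcases u with i | i <;> rcases v with j | j <;>
        simp only [completeBipartiteGraph_adj, Sum.isLeft_inl, Sum.isRight_inl,
          Sum.isLeft_inr, Sum.isRight_inr, true_and, and_true, false_and, and_false,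
          or_false, false_or] at he
      · exact absurd he (by simp)
      · exact ⟨(i, j), rfl⟩
      · exact ⟨(j, i), Sym2.eq_swap⟩
      · exact absurd he (by simp)
  · rintro ⟨p, rfl⟩
    rw [emb, SimpleGraph.mem_edgeSet]
    simp

lemma shared_iff (i : Fin m) (j : Fin n) (q : Fin m × Fin n) :
    (∃ v, v ∈ emb m n (i, j) ∧ v ∈ emb m n q) ↔ (q.1 = i ∨ q.2 = j) := by
  obtain ⟨i', j'⟩ := q
  simp only [emb, Sym2.mem_iff]
  constructor
  · rintro ⟨v, (rfl | rfl), (h | h)⟩ <;> simp_all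
  · rintro (rfl | rfl)
    · exact ⟨Sum.inl i', Or.inl rfl, Or.inl rfl⟩
    · exact ⟨Sum.inr j', Or.inr rfl, Or.inr rfl⟩

lemma closedNbhd_eq (i : Fin m) (j : Fin n) :
    closedNbhd (completeBipartiteGraph (Fin m) (Fin n)) (emb m n (i, j)) =
      (Finset.univ.filter (fun q : Fin m × Fin n => q.1 = i ∨ q.2 = j)).image (emb m n) := by
  ext e
  simp only [closedNbhd, mem_filter, mem_image, mem_univ, true_and]
  constructor
  · rintro ⟨he, hv⟩
    rw [edgeFin_eq] at he
    obtain ⟨q, _, rfl⟩ := Finset.mem_image.mp he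
    exact ⟨q, (shared_iff i j q).mp hv, rfl⟩
  · rintro ⟨q, hq, rfl⟩
    refine ⟨?_, (shared_iff i j q).mpr hq⟩
    rw [edgeFin_eq]
    exact Finset.mem_image_of_mem _ (mem_univ q)

lemma sum_cross (h : Fin m × Fin n → ℤ) (i : Fin m) (j : Fin n) :
    ∑ q ∈ Finset.univ.filter (fun q : Fin m × Fin n => q.1 = i ∨ q.2 = j), h q
      = (∑ j' : Fin n, h (i, j')) + (∑ i' : Fin m, h (i', j)) - h (i, j) := by
  have key := Finset.sum_union_inter
    (s₁ := Finset.univ.filter (fun q : Fin m × Fin n => q.1 = i))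
    (s₂ := Finset.univ.filter (fun q : Fin m × Fin n => q.2 = j)) (f := h)
  rw [← Finset.filter_or, ← Finset.filter_and] at key
  have h1 : Finset.univ.filter (fun q : Fin m × Fin n => q.1 = i) = {i} ×ˢ Finset.univ := by
    ext ⟨a, b⟩; simp [eq_comm]
  have h2 : Finset.univ.filter (fun q : Fin m × Fin n => q.2 = j) = Finset.univ ×ˢ {j} := by
    ext ⟨a, b⟩; simp [eq_comm]
  have h3 : Finset.univ.filter (fun q : Fin m × Fin n => q.1 = i ∧ q.2 = j) = {(i, j)} := by
    ext ⟨a, b⟩; simp [Prod.ext_iff]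
  rw [h1, h2, h3] at key
  rw [Finset.sum_product, Finset.sum_singleton] at key
  rw [Finset.sum_product_right, Finset.sum_singleton, Finset.sum_singleton] at key
  linarith

/-- extract the matrix of an edge function -/
noncomputable def gOf (m n : ℕ) (f : Sym2 (Fin m ⊕ Fin n) → ℤ) (i j : ℕ) : ℤ :=
  if h : i < m ∧ j < n then f (emb m n (⟨i, h.1⟩, ⟨j, h.2⟩)) else 0

lemma gOf_emb (f : Sym2 (Fin m ⊕ Fin n) → ℤ) (i : Fin m) (j : Fin n) :
    gOf m n f i.val j.val = f (emb m n (i, j)) := by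
  rw [gOf, dif_pos ⟨i.isLt, j.isLt⟩]

lemma row_sum_eq (f : Sym2 (Fin m ⊕ Fin n) → ℤ) (i : Fin m) :
    ∑ j' ∈ Finset.range n, gOf m n f i.val j' = ∑ j' : Fin n, f (emb m n (i, j')) := by
  rw [← Fin.sum_univ_eq_sum_range (fun j' => gOf m n f i.val j') n]
  exact Finset.sum_congr rfl (fun j' _ => gOf_emb f i j')

lemma col_sum_eq (f : Sym2 (Fin m ⊕ Fin n) → ℤ) (j : Fin n) :
    ∑ i' ∈ Finset.range m, gOf m n f i' j.val = ∑ i' : Fin m, f (emb m n (i', j)) := by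
  rw [← Fin.sum_univ_eq_sum_range (fun i' => gOf m n f i' j.val) m]
  exact Finset.sum_congr rfl (fun i' _ => gOf_emb f i' j)

lemma edge_sum_eq (f : Sym2 (Fin m ⊕ Fin n) → ℤ) :
    ∑ e ∈ edgeFin (completeBipartiteGraph (Fin m) (Fin n)), f e
      = ∑ i ∈ Finset.range m, ∑ j ∈ Finset.range n, gOf m n f i j := by
  rw [edgeFin_eq, Finset.sum_image (fun p _ q _ h => emb_inj h), Fintype.sum_prod_type]
  rw [← Fin.sum_univ_eq_sum_range (fun i => ∑ j ∈ Finset.range n, gOf m n f i j) m]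
  exact Finset.sum_congr rfl (fun i _ => (row_sum_eq f i).symm)

lemma nbhd_sum_eq (f : Sym2 (Fin m ⊕ Fin n) → ℤ) (i : Fin m) (j : Fin n) :
    ∑ e' ∈ closedNbhd (completeBipartiteGraph (Fin m) (Fin n)) (emb m n (i, j)), f e'
      = (∑ j' ∈ Finset.range n, gOf m n f i.val j')
        + (∑ i' ∈ Finset.range m, gOf m n f i' j.val) - gOf m n f i.val j.val := by
  rw [closedNbhd_eq, Finset.sum_image (fun p _ q _ h => emb_inj h),
    sum_cross (fun q => f (emb m n q)) i j, row_sum_eq, col_sum_eq, gOf_emb]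

end Stmt14Aux

open Stmt14Aux in
theorem stmt14 (m n : ℕ) (hmn : m ≤ n) (hm : Odd m) (hn : Odd n) :
    gammaS (completeBipartiteGraph (Fin m) (Fin n)) = min (2 * (m : ℤ) - 1) (n : ℤ) := by
  have hm1 : 1 ≤ m := hm.pos
  set G := completeBipartiteGraph (Fin m) (Fin n) with hG
  set Z : Set ℤ := {z : ℤ | ∃ f, IsSEDF G f ∧ z = ∑ e ∈ edgeFin G, f e} with hZ
  -- lower bound: every achievable value is ≥ min
  have hlb : ∀ z ∈ Z, min (2 * (m:ℤ) - 1) (n:ℤ) ≤ z := by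
    rintro z ⟨f, ⟨hfv, hfn⟩, rfl⟩
    rw [edge_sum_eq f]
    apply matrix_lower m n hm hn (gOf m n f)
    · intro i hi j hj
      have hmem : emb m n (⟨i, hi⟩, ⟨j, hj⟩) ∈ edgeFin G := by
        rw [hG, edgeFin_eq]
        exact Finset.mem_image_of_mem _ (Finset.mem_univ _)
      have := hfv _ hmem
      rwa [show gOf m n f i j = f (emb m n (⟨i, hi⟩, ⟨j, hj⟩)) from
        gOf_emb f ⟨i, hi⟩ ⟨j, hj⟩]
    · intro i hi j hj
      have hmem : emb m n (⟨i, hi⟩, ⟨j, hj⟩) ∈ edgeFin G := by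
        rw [hG, edgeFin_eq]
        exact Finset.mem_image_of_mem _ (Finset.mem_univ _)
      have h1 := hfn _ hmem
      rwa [nbhd_sum_eq f ⟨i, hi⟩ ⟨j, hj⟩] at h1
  -- membership: min is achieved
  have hmem : min (2 * (m:ℤ) - 1) (n:ℤ) ∈ Z := by
    have hget : ∃ g : ℕ → ℕ → ℤ,
        (∀ i < m, ∀ j < n, g i j = 1 ∨ g i j = -1) ∧
        (∀ i < m, ∀ j < n,
          1 ≤ (∑ j' ∈ Finset.range n, g i j') + (∑ i' ∈ Finset.range m, g i' j) - g i j) ∧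
        (∑ i ∈ Finset.range m, ∑ j ∈ Finset.range n, g i j)
          = min (2 * (m:ℤ) - 1) (n:ℤ) := by
      by_cases hsmall : n ≤ 2 * m - 1
      · obtain ⟨g, hv, hc, hs⟩ := matrix_upper_A m n hmn hm hn
        refine ⟨g, hv, hc, ?_⟩
        rw [hs, min_eq_right]
        have : (n:ℤ) ≤ 2 * (m:ℤ) - 1 := by
          have : (n:ℤ) ≤ ((2 * m - 1 : ℕ) : ℤ) := by exact_mod_cast hsmall
          push_cast [Nat.cast_sub (by omega : 1 ≤ 2 * m)] at this
          omega
        omega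
      · have hbig : 2 * m + 1 ≤ n := by
          obtain ⟨v, hv⟩ := hn; omega
        obtain ⟨g, hv, hc, hs⟩ := matrix_upper_B m n hm hn hbig
        refine ⟨g, hv, hc, ?_⟩
        rw [hs, min_eq_left]
        have : 2 * (m:ℤ) + 1 ≤ (n:ℤ) := by exact_mod_cast hbig
        omega
    obtain ⟨g, hv, hc, hs⟩ := hget
    -- build the edge function
    set F : (Fin m ⊕ Fin n) → (Fin m ⊕ Fin n) → ℤ := fun u v =>
      match u, v with
      | Sum.inl i, Sum.inr j => g i.val j.val
      | Sum.inr j, Sum.inl i => g i.val j.val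
      | _, _ => 0 with hF
    have hFsymm : ∀ u v, F u v = F v u := by
      rintro (i | i) (j | j) <;> rfl
    set f : Sym2 (Fin m ⊕ Fin n) → ℤ := Sym2.lift ⟨F, hFsymm⟩ with hf
    have hfemb : ∀ (i : Fin m) (j : Fin n), f (emb m n (i, j)) = g i.val j.val := by
      intro i j; rw [hf, emb, Sym2.lift_mk]
    have hgOf : ∀ i < m, ∀ j < n, gOf m n f i j = g i j := by
      intro i hi j hj
      rw [show gOf m n f i j = f (emb m n (⟨i, hi⟩, ⟨j, hj⟩)) from
        gOf_emb f ⟨i, hi⟩ ⟨j, hj⟩, hfemb]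
    refine ⟨f, ⟨?_, ?_⟩, ?_⟩
    · intro e he
      rw [hG, edgeFin_eq] at he
      obtain ⟨q, _, rfl⟩ := Finset.mem_image.mp he
      rw [show f (emb m n q) = g q.1.val q.2.val from hfemb q.1 q.2]
      exact hv _ q.1.isLt _ q.2.isLt
    · intro e he
      rw [hG, edgeFin_eq] at he
      obtain ⟨⟨i, j⟩, _, rfl⟩ := Finset.mem_image.mp he
      rw [hG, nbhd_sum_eq f i j]
      have e1 : ∑ j' ∈ Finset.range n, gOf m n f i.val j'
          = ∑ j' ∈ Finset.range n, g i.val j' :=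
        Finset.sum_congr rfl (fun j' hj' => hgOf i.val i.isLt j' (Finset.mem_range.mp hj'))
      have e2 : ∑ i' ∈ Finset.range m, gOf m n f i' j.val
          = ∑ i' ∈ Finset.range m, g i' j.val :=
        Finset.sum_congr rfl (fun i' hi' => hgOf i' (Finset.mem_range.mp hi') j.val j.isLt)
      rw [e1, e2, hgOf i.val i.isLt j.val j.isLt]
      exact hc i.val i.isLt j.val j.isLt
    · rw [edge_sum_eq f, ← hs]
      refine Finset.sum_congr rfl (fun i hi => Finset.sum_congr rfl (fun j hj => ?_))
      exact (hgOf i (Finset.mem_range.mp hi) j (Finset.mem_range.mp hj)).symm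
  have hne : Z.Nonempty := ⟨_, hmem⟩
  have hbdd : BddBelow Z := ⟨_, fun z hz => hlb z hz⟩
  rw [gammaS, ← hZ]
  exact le_antisymm (csInf_le hbdd hmem) (le_csInf hne hlb)
end

section
/- Let m ≤ n be natural numbers with m even and n odd. Then γ'_s(K_{m,n}) = min(3m, max(2m, n + 1)). -/
open scoped Classical

-- token counting
noncomputable def cnt (M A L r : ℕ) : ℤ :=
  ∑ t ∈ Finset.Ico A (A + L), if t % M = r then (1 : ℤ) else 0

lemma cnt_nonneg (M A L r : ℕ) : 0 ≤ cnt M A L r := by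
  apply Finset.sum_nonneg; intro t _; split <;> norm_num

lemma cnt_le_one (M A L r : ℕ) (hL : L ≤ M) : cnt M A L r ≤ 1 := by
  classical
  rw [cnt, Finset.sum_boole]
  norm_cast
  apply Finset.card_le_one.2
  intro t ht t' ht'
  simp only [Finset.mem_filter, Finset.mem_Ico] at ht ht'
  rcases Nat.le_total t t' with h | h
  · have hdvd : M ∣ t' - t := (Nat.modEq_iff_dvd' h).1 (ht.2.trans ht'.2.symm)
    rcases hdvd with ⟨c, hc⟩
    rcases Nat.eq_zero_or_pos c with rfl | hc0
    · omega
    · have : M * 1 ≤ M * c := Nat.mul_le_mul_left _ hc0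
      omega
  · have hdvd : M ∣ t - t' := (Nat.modEq_iff_dvd' h).1 (ht'.2.trans ht.2.symm)
    rcases hdvd with ⟨c, hc⟩
    rcases Nat.eq_zero_or_pos c with rfl | hc0
    · omega
    · have : M * 1 ≤ M * c := Nat.mul_le_mul_left _ hc0
      omega

lemma cnt_row_total (M A L : ℕ) (hM : 0 < M) :
    ∑ r ∈ Finset.range M, cnt M A L r = L := by
  classical
  unfold cnt
  rw [Finset.sum_comm]
  have : ∀ t ∈ Finset.Ico A (A + L), (∑ r ∈ Finset.range M, if t % M = r then (1:ℤ) else 0) = 1 := by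
    intro t _
    rw [Finset.sum_ite_eq]
    simp [Nat.mod_lt t hM]
  rw [Finset.sum_congr rfl this]
  simp

lemma cnt_concat (M A L1 L2 r : ℕ) :
    cnt M A L1 r + cnt M (A + L1) L2 r = cnt M A (L1 + L2) r := by
  unfold cnt
  rw [← Finset.sum_Ico_consecutive (fun t => if t % M = r then (1:ℤ) else 0)
    (Nat.le_add_right A L1) (by omega : A + L1 ≤ A + (L1 + L2))]
  rw [Nat.add_assoc]

lemma cnt_block (M Q r : ℕ) (hM : 0 < M) (hr : r < M) :
    cnt M (Q * M) M r = 1 := by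
  classical
  unfold cnt
  rw [Finset.sum_Ico_eq_sum_range]
  have : ∀ s ∈ Finset.range (Q * M + M - Q * M), ((if (Q * M + s) % M = r then (1:ℤ) else 0))
      = if s = r then (1:ℤ) else 0 := by
    intro s hs
    simp only [Finset.mem_range] at hs
    have hs' : s < M := by omega
    have : (Q * M + s) % M = s := by
      rw [Nat.add_comm, Nat.add_mul_mod_self_right]
      exact Nat.mod_eq_of_lt hs'
    rw [this]
  rw [Finset.sum_congr rfl this, Finset.sum_ite_eq']
  simp [hr]

lemma cnt_zero_mul (M Q r : ℕ) (hM : 0 < M) (hr : r < M) :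
    cnt M 0 (Q * M) r = Q := by
  induction Q with
  | zero => simp [cnt]
  | succ q ih =>
    have : q * M + M = (q+1) * M := by ring
    rw [show (q+1) * M = q * M + M by ring, ← cnt_concat M 0 (q * M) M r]
    rw [ih, show (0 : ℕ) + q * M = q * M by omega, cnt_block M q r hM hr]
    push_cast; ring

def Tc (d : ℕ → ℕ) (j : ℕ) : ℕ := ∑ j' ∈ Finset.range j, d j'

lemma cnt_rows (M : ℕ) (d : ℕ → ℕ) (N r : ℕ) :
    ∑ j ∈ Finset.range N, cnt M (Tc d j) (d j) r = cnt M 0 (Tc d N) r := by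
  induction N with
  | zero => simp [cnt, Tc]
  | succ N ih =>
    rw [Finset.sum_range_succ, ih, show Tc d (N+1) = Tc d N + d N by
      simp [Tc, Finset.sum_range_succ]]
    rw [← cnt_concat M 0 (Tc d N) (d N) r]
    simp

lemma sum_if_lt (n h : ℕ) (hh : h ≤ n) :
    ∑ j ∈ Finset.range n, (if j < h then (1:ℤ) else -1) = 2 * h - n := by
  rw [Finset.range_eq_Ico, ← Finset.sum_Ico_consecutive _ (Nat.zero_le h) hh]
  have h1 : ∑ j ∈ Finset.Ico 0 h, (if j < h then (1:ℤ) else -1) = h := by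
    rw [Finset.sum_congr rfl (fun j hj => by
      simp only [Finset.mem_Ico] at hj; rw [if_pos hj.2])]
    simp
  have h2 : ∑ j ∈ Finset.Ico h n, (if j < h then (1:ℤ) else -1) = -((n:ℤ) - h) := by
    rw [Finset.sum_congr rfl (fun j hj => by
      simp only [Finset.mem_Ico] at hj; rw [if_neg (by omega)])]
    simp [Nat.card_Ico]
    push_cast [Nat.cast_sub hh]
    ring
  rw [h1, h2]; ring

lemma scheme (m n a : ℕ) (ha : a < m)
    (hn : Odd n)
    (d : ℕ → ℕ)
    (hd1 : ∀ j, j < n → d j ≤ m - a)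
    (hd2 : ∑ j ∈ Finset.range n, d j = (m - a) * ((n+3)/2))
    (hd3 : 1 ≤ a → ∀ j, j < (n+1)/2 → m + 2 ≤ 2 * (a + d j))
    (hd4 : ∀ j, j < n → m ≤ 2 * ((if j < (n+1)/2 then a else 0) + d j)) :
    ∃ g : ℕ → ℕ → ℤ,
      (∀ i, i < m → ∀ j, j < n → g i j = 1 ∨ g i j = -1) ∧
      (∀ i, i < m → ∀ j, j < n →
        2 ≤ (∑ j' ∈ Finset.range n, g i j') + (∑ i' ∈ Finset.range m, g i' j) - g i j) ∧
      (∑ i ∈ Finset.range m, ∑ j ∈ Finset.range n, g i j) = 3 * m - 2 * a := by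
  obtain ⟨k, hk⟩ := hn
  set M := m - a with hM
  set h := (n+1)/2 with hh
  have hMpos : 0 < M := by omega
  have hhn : h ≤ n := by omega
  have hhval : (h : ℕ) = k + 1 := by omega
  have hKval : (n+3)/2 = k + 2 := by omega
  set g : ℕ → ℕ → ℤ := fun i j =>
    if i < a then (if j < h then 1 else -1)
    else (2 * cnt M (Tc d j) (d j) (i - a) - 1) with hg
  -- cnt is 0 or 1 for j < n
  have hcnt01 : ∀ j, j < n → ∀ r, cnt M (Tc d j) (d j) r = 0 ∨ cnt M (Tc d j) (d j) r = 1 := by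
    intro j hj r
    have h1 := cnt_nonneg M (Tc d j) (d j) r
    have h2 := cnt_le_one M (Tc d j) (d j) r (hd1 j hj)
    omega
  have hpm : ∀ i, i < m → ∀ j, j < n → g i j = 1 ∨ g i j = -1 := by
    intro i _ j hj
    simp only [hg]
    split
    · split <;> simp
    · rcases hcnt01 j hj (i - a) with hc | hc <;> rw [hc] <;> norm_num
  -- row sums
  have hrow : ∀ i, i < m → ∑ j' ∈ Finset.range n, g i j' = if i < a then 1 else 3 := by
    intro i hi
    by_cases hia : i < a
    · rw [if_pos hia]
      simp only [hg, if_pos hia]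
      rw [sum_if_lt n h hhn]
      omega
    · rw [if_neg hia]
      simp only [hg, if_neg hia]
      rw [Finset.sum_sub_distrib, ← Finset.mul_sum, cnt_rows]
      have hTc : Tc d n = ((n+3)/2) * M := by
        simp only [Tc]; rw [hd2]; ring
      rw [hTc, cnt_zero_mul M ((n+3)/2) (i - a) hMpos (by omega)]
      simp only [Finset.sum_const, Finset.card_range, nsmul_eq_mul, mul_one]
      push_cast
      omega
  -- column sums
  have hcol : ∀ j, j < n → ∑ i' ∈ Finset.range m, g i' j =
      (if j < h then (a:ℤ) else -(a:ℤ)) + 2 * (d j) - M := by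
    intro j hj
    rw [Finset.range_eq_Ico, ← Finset.sum_Ico_consecutive _ (Nat.zero_le a) (le_of_lt ha)]
    have h1 : ∑ i ∈ Finset.Ico 0 a, g i j = a * (if j < h then (1:ℤ) else -1) := by
      have hcongr : ∀ i ∈ Finset.Ico 0 a, g i j = (if j < h then (1:ℤ) else -1) := by
        intro i hi
        simp only [Finset.mem_Ico] at hi
        simp only [hg, if_pos hi.2]
      rw [Finset.sum_congr rfl hcongr, Finset.sum_const, Nat.card_Ico, nsmul_eq_mul]
      simp
    have h2 : ∑ i ∈ Finset.Ico a m, g i j = 2 * (d j) - M := by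
      rw [Finset.sum_Ico_eq_sum_range]
      have : ∀ r ∈ Finset.range (m - a), g (a + r) j
          = 2 * cnt M (Tc d j) (d j) r - 1 := by
        intro r _
        simp only [hg, if_neg (by omega : ¬ a + r < a), Nat.add_sub_cancel_left]
      rw [Finset.sum_congr rfl this]
      rw [Finset.sum_sub_distrib, ← Finset.mul_sum, cnt_row_total M _ _ hMpos]
      simp
      omega
    rw [h1, h2]
    split <;> push_cast <;> ring
  refine ⟨g, hpm, ?_, ?_⟩
  · intro i hi j hj
    rw [hrow i hi, hcol j hj]
    have hdj4 := hd4 j hj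
    have hMa : (M : ℤ) = (m : ℤ) - a := by omega
    by_cases hia : i < a
    · have ha1 : 1 ≤ a := by omega
      rw [if_pos hia]
      by_cases hjh : j < h
      · have h3 := hd3 ha1 j hjh
        rw [if_pos hjh] at hdj4 ⊢
        have hgv : g i j = 1 := by simp only [hg, if_pos hia, if_pos hjh]
        rw [hgv]
        push_cast
        omega
      · rw [if_neg hjh] at hdj4 ⊢
        have hgv : g i j = -1 := by simp only [hg, if_pos hia, if_neg hjh]
        rw [hgv]
        push_cast
        omega
    · rw [if_neg hia]
      have hgpm := hpm i hi j hj
      by_cases hjh : j < h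
      · rw [if_pos hjh] at hdj4 ⊢
        rcases hgpm with hgv | hgv <;> rw [hgv] <;> push_cast <;> omega
      · rw [if_neg hjh] at hdj4 ⊢
        rcases hgpm with hgv | hgv <;> rw [hgv] <;> push_cast <;> omega
  · rw [Finset.sum_congr rfl (fun i hi => hrow i (Finset.mem_range.1 hi))]
    rw [Finset.range_eq_Ico, ← Finset.sum_Ico_consecutive _ (Nat.zero_le a) (le_of_lt ha)]
    have h1 : ∑ i ∈ Finset.Ico 0 a, (if i < a then (1:ℤ) else 3) = a := by
      rw [Finset.sum_congr rfl (fun i hi => by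
        simp only [Finset.mem_Ico] at hi; rw [if_pos hi.2])]
      simp
    have h2 : ∑ i ∈ Finset.Ico a m, (if i < a then (1:ℤ) else 3) = 3 * ((m:ℤ) - a) := by
      rw [Finset.sum_congr rfl (fun i hi => by
        simp only [Finset.mem_Ico] at hi; rw [if_neg (by omega)])]
      rw [Finset.sum_const, Nat.card_Ico, nsmul_eq_mul]
      push_cast [Nat.cast_sub (le_of_lt ha)]
      ring
    rw [h1, h2]; ring

lemma sum_piece3 (n ρ h c1 c2 c3 : ℕ) (hρ : ρ ≤ h) (hh : h ≤ n) :
    ∑ j ∈ Finset.range n, (if j < ρ then c1 else if j < h then c2 else c3)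
      = ρ * c1 + (h - ρ) * c2 + (n - h) * c3 := by
  rw [Finset.range_eq_Ico, ← Finset.sum_Ico_consecutive _ (Nat.zero_le h) hh,
    ← Finset.sum_Ico_consecutive _ (Nat.zero_le ρ) hρ]
  have e1 : ∀ j ∈ Finset.Ico 0 ρ, (if j < ρ then c1 else if j < h then c2 else c3) = c1 := by
    intro j hj; simp only [Finset.mem_Ico] at hj; rw [if_pos hj.2]
  have e2 : ∀ j ∈ Finset.Ico ρ h, (if j < ρ then c1 else if j < h then c2 else c3) = c2 := by
    intro j hj; simp only [Finset.mem_Ico] at hj; rw [if_neg (by omega), if_pos hj.2]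
  have e3 : ∀ j ∈ Finset.Ico h n, (if j < ρ then c1 else if j < h then c2 else c3) = c3 := by
    intro j hj; simp only [Finset.mem_Ico] at hj; rw [if_neg (by omega), if_neg (by omega)]
  rw [Finset.sum_congr rfl e1, Finset.sum_congr rfl e2, Finset.sum_congr rfl e3]
  simp [Nat.card_Ico, mul_comm]

lemma sum_piece (n h c1 c2 : ℕ) (hh : h ≤ n) :
    ∑ j ∈ Finset.range n, (if j < h then c1 else c2) = h * c1 + (n - h) * c2 := by
  have := sum_piece3 n h h c1 c1 c2 le_rfl hh
  simp only [Nat.sub_self, Nat.zero_mul, Nat.add_zero] at this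
  rw [← this]
  apply Finset.sum_congr rfl
  intro j _
  by_cases hj : j < h <;> simp [hj]

lemma upper_nat (m n : ℕ) (hmn : m < n) (hm : Even m) (hn : Odd n) (hm0 : 0 < m) :
    ∃ g : ℕ → ℕ → ℤ,
      (∀ i, i < m → ∀ j, j < n → g i j = 1 ∨ g i j = -1) ∧
      (∀ i, i < m → ∀ j, j < n →
        2 ≤ (∑ j' ∈ Finset.range n, g i j') + (∑ i' ∈ Finset.range m, g i' j) - g i j) ∧
      (∑ i ∈ Finset.range m, ∑ j ∈ Finset.range n, g i j)
        = min (3 * (m : ℤ)) (max (2 * (m : ℤ)) ((n : ℤ) + 1)) := by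
  obtain ⟨m', hm'⟩ := hm
  obtain ⟨k, hk⟩ := hn
  subst hm' hk
  have hm'1 : 1 ≤ m' := by omega
  have hk1 : m' ≤ k := by omega
  have hn2 : (2*k+1+1)/2 = k+1 := by omega
  have hn3 : (2*k+1+3)/2 = k+2 := by omega
  rcases le_or_gt (k + 1) (2 * m') with hA | hBC
  · -- case A : n + 1 ≤ 2m, target 2m
    set q := (m'+m') / (k+1) with hq
    set ρ := (m'+m') % (k+1) with hρ
    have hdm : (k+1) * q + ρ = m'+m' := Nat.div_add_mod (m'+m') (k+1)
    have hρlt : ρ < k + 1 := Nat.mod_lt _ (by omega)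
    have hq1 : 1 ≤ q := (Nat.one_le_div_iff (by omega)).2 (by omega)
    have hqm' : q ≤ m' := by
      by_contra hc
      have h1 : m' + 1 ≤ q := by omega
      have h2 : (k+1) * (m'+1) ≤ (k+1) * q := Nat.mul_le_mul_left _ h1
      have h3 : 2 * (m'+1) ≤ (k+1) * (m'+1) := Nat.mul_le_mul_right _ (by omega)
      omega
    have hq1m' : 1 ≤ ρ → q + 1 ≤ m' := by
      intro hρ1
      by_contra hc
      have h1 : m' ≤ q := by omega
      have h2 : (k+1) * m' ≤ (k+1) * q := Nat.mul_le_mul_left _ h1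
      have h3 : 2 * m' ≤ (k+1) * m' := Nat.mul_le_mul_right _ (by omega)
      omega
    have := scheme (m'+m') (2*k+1) m' (by omega) ⟨k, rfl⟩
      (fun j => if j < ρ then q+1 else if j < k+1 then q else m')
      (by intro j hj
          by_cases h1 : j < ρ
          · rw [if_pos h1]; have := hq1m' (by omega); omega
          · rw [if_neg h1]; split <;> omega)
      (by
        rw [sum_piece3 (2*k+1) ρ (k+1) (q+1) q m' (by omega) (by omega), hn3,
          show m'+m'-m' = m' from by omega]
        have hdmz : ((k:ℤ)+1) * q + ρ = (m':ℤ) + m' := by exact_mod_cast hdm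
        zify [show ρ ≤ k+1 by omega, show k+1 ≤ 2*k+1 by omega]
        linear_combination hdmz)
      (by intro _ j hj; rw [hn2] at hj
          by_cases h1 : j < ρ
          · rw [if_pos h1]; omega
          · rw [if_neg h1, if_pos (by omega)]; omega)
      (by intro j hj; rw [hn2]
          by_cases hjh : j < k+1
          · rw [if_pos hjh]; split <;> omega
          · rw [if_neg hjh, if_neg (by omega), if_neg (by omega)]; omega)
    obtain ⟨g, h1, h2, h3⟩ := this
    refine ⟨g, h1, h2, ?_⟩
    rw [h3]
    rw [show max (2 * ((m'+m' : ℕ) : ℤ)) (((2*k+1 : ℕ) : ℤ) + 1) = 2 * ((m'+m' : ℕ) : ℤ) by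
      push_cast; omega]
    rw [min_eq_right (by push_cast; omega)]
    push_cast; omega
  rcases le_or_gt (k + 1) (3 * m') with hB | hC
  · -- case B : 2m ≤ n+1 ≤ 3m, target n+1
    have := scheme (m'+m') (2*k+1) (3 * m' - (k+1)) (by omega) ⟨k, rfl⟩
      (fun j => if j < k+1 then k+2-2*m' else m')
      (by intro j hj; split <;> omega)
      (by
        rw [sum_piece (2*k+1) (k+1) (k+2-2*m') m' (by omega), hn3]
        zify [show 2*m' ≤ k+2 by omega, show k+1 ≤ 2*k+1 by omega,
          show 3*m'-(k+1) ≤ m'+m' by omega, show k+1 ≤ 3*m' from hB]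
        ring)
      (by intro _ j hj; rw [hn2] at hj; rw [if_pos (show j < k+1 by omega)]; omega)
      (by intro j hj; rw [hn2]
          by_cases hjh : j < k+1
          · rw [if_pos hjh, if_pos hjh]; omega
          · rw [if_neg hjh, if_neg hjh]; omega)
    obtain ⟨g, h1, h2, h3⟩ := this
    refine ⟨g, h1, h2, ?_⟩
    rw [h3]
    rw [show max (2 * ((m'+m' : ℕ) : ℤ)) (((2*k+1 : ℕ) : ℤ) + 1) = ((2*k+1 : ℕ) : ℤ) + 1 by
      push_cast; omega]
    rw [min_eq_right (by push_cast; omega)]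
    push_cast; omega
  · -- case C : n+1 ≥ 3m, target 3m
    have := scheme (m'+m') (2*k+1) 0 (by omega) ⟨k, rfl⟩
      (fun j => if j < 3*m' then m'+1 else m')
      (by intro j hj; split <;> omega)
      (by
        rw [sum_piece (2*k+1) (3*m') (m'+1) m' (by omega), hn3, Nat.sub_zero]
        zify [show 3*m' ≤ 2*k+1 by omega]
        ring)
      (by omega)
      (by intro j hj; split <;> split <;> omega)
    obtain ⟨g, h1, h2, h3⟩ := this
    refine ⟨g, h1, h2, ?_⟩
    rw [h3]
    rw [show max (2 * ((m'+m' : ℕ) : ℤ)) (((2*k+1 : ℕ) : ℤ) + 1) = ((2*k+1 : ℕ) : ℤ) + 1 by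
      push_cast; omega]
    rw [min_eq_left (by push_cast; omega)]
    push_cast; ring

lemma parity_sum {α : Type*} (s : Finset α) (f : α → ℤ) (h : ∀ x ∈ s, f x = 1 ∨ f x = -1) :
    ∃ P : ℤ, ∑ x ∈ s, f x = 2 * P - s.card := by
  classical
  have hcongr : ∀ x ∈ s, f x = 2 * (if f x = 1 then (1:ℤ) else 0) - 1 := by
    intro x hx; rcases h x hx with h' | h' <;> rw [h'] <;> simp
  rw [Finset.sum_congr rfl hcongr, Finset.sum_sub_distrib, ← Finset.mul_sum]
  refine ⟨((s.filter (fun x => f x = 1)).card : ℤ), ?_⟩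
  rw [Finset.sum_boole]
  simp

lemma lower_fin (m n : ℕ) (hmn : m ≤ n) (hm : Even m) (hn : Odd n) (hm0 : 0 < m)
    (g : Fin m → Fin n → ℤ)
    (hpm : ∀ i j, g i j = 1 ∨ g i j = -1)
    (hc : ∀ i j, 1 ≤ (∑ j', g i j') + (∑ i', g i' j) - g i j) :
    min (3 * (m : ℤ)) (max (2 * (m : ℤ)) ((n : ℤ) + 1)) ≤ ∑ i, ∑ j, g i j := by
  classical
  obtain ⟨m', hm'⟩ := hm
  obtain ⟨k, hk⟩ := hn
  set R := fun i => ∑ j', g i j' with hR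
  set C := fun j => ∑ i', g i' j with hC
  have hcard_m : ((Finset.univ : Finset (Fin m)).card : ℤ) = m := by simp
  have hcard_n : ((Finset.univ : Finset (Fin n)).card : ℤ) = n := by simp
  have hRpar : ∀ i, ∃ P : ℤ, R i = 2 * P - n := by
    intro i
    obtain ⟨P, hP⟩ := parity_sum Finset.univ (fun j => g i j) (fun j _ => hpm i j)
    exact ⟨P, by rw [hR]; simp only at hP ⊢; rw [hP]; simp⟩
  have hCpar : ∀ j, ∃ P : ℤ, C j = 2 * P - m := by
    intro j
    obtain ⟨P, hP⟩ := parity_sum Finset.univ (fun i => g i j) (fun i _ => hpm i j)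
    exact ⟨P, by rw [hC]; simp only at hP ⊢; rw [hP]; simp⟩
  have master : ∀ i j, 2 ≤ R i + C j - g i j := by
    intro i j
    have h1 := hc i j
    obtain ⟨P, hP⟩ := hRpar i
    obtain ⟨Q, hQ⟩ := hCpar j
    simp only [hR, hC] at hP hQ h1 ⊢
    rw [hP, hQ] at h1 ⊢
    rcases hpm i j with h' | h' <;> rw [h'] at h1 ⊢ <;> omega
  have hT : ∑ i, ∑ j, g i j = ∑ j, C j := Finset.sum_comm
  have hTR : ∑ i, ∑ j, g i j = ∑ i, R i := rfl
  obtain ⟨j0, _, hj0⟩ := Finset.exists_min_image Finset.univ C ⟨⟨0, by omega⟩, Finset.mem_univ _⟩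
  obtain ⟨i0, _, hi0⟩ := Finset.exists_min_image Finset.univ R ⟨⟨0, by omega⟩, Finset.mem_univ _⟩
  have hmZ : (2:ℤ) ≤ m := by omega
  have hnZ : (m:ℤ) ≤ n := by exact_mod_cast hmn
  -- T ≥ 2m + (1-m) * C j0
  have hsum1 : 2 * (m:ℤ) + C j0 - m * C j0 ≤ ∑ i, ∑ j, g i j := by
    rw [hTR]
    have step : ∀ i ∈ Finset.univ, 2 + g i j0 - C j0 ≤ R i := by
      intro i _
      have := master i j0
      omega
    calc 2 * (m:ℤ) + C j0 - m * C j0 = ∑ i : Fin m, (2 + g i j0 - C j0) := by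
          rw [Finset.sum_sub_distrib, Finset.sum_add_distrib, Finset.sum_const, Finset.sum_const]
          have : ∑ i, g i j0 = C j0 := rfl
          rw [this]
          push_cast [Finset.card_univ, Fintype.card_fin]
          ring
      _ ≤ ∑ i, R i := Finset.sum_le_sum step
  obtain ⟨Q0, hQ0⟩ := hCpar j0
  have hfixR : Finset.univ.sum R = ∑ i, R i := rfl
  have hfixC : Finset.univ.sum C = ∑ j, C j := rfl
  rcases le_or_gt (C j0) 0 with hcneg | hcpos
  · rcases (show C j0 = 0 ∨ C j0 ≤ -2 by omega) with hc0 | hc2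
    · -- c = 0
      rw [hc0] at hsum1
      have hT2m : 2 * (m:ℤ) ≤ ∑ i, ∑ j, g i j := by
        have : (m:ℤ) * 0 = 0 := by ring
        omega
      obtain ⟨P0, hP0⟩ := hRpar i0
      have hr1 : 1 ≤ R i0 := by
        have := master i0 j0
        rcases hpm i0 j0 with h' | h' <;> omega
      rcases (show R i0 = 1 ∨ 3 ≤ R i0 by omega) with hr | hr
      · -- min row = 1 : T ≥ n + 1
        have hTn1 : (n:ℤ) + 1 ≤ ∑ i, ∑ j, g i j := by
          rw [hT]
          have step : ∀ j ∈ Finset.univ, 1 + g i0 j ≤ C j := by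
            intro j _
            have := master i0 j
            omega
          calc (n:ℤ) + 1 = ∑ j : Fin n, (1 + g i0 j) := by
                rw [Finset.sum_add_distrib, Finset.sum_const]
                have : ∑ j, g i0 j = R i0 := rfl
                rw [this, hr]
                push_cast [Finset.card_univ, Fintype.card_fin]
                ring
            _ ≤ ∑ j, C j := Finset.sum_le_sum step
        omega
      · -- min row ≥ 3 : T ≥ 3m
        have hT3m : 3 * (m:ℤ) ≤ ∑ i, ∑ j, g i j := by
          rw [hTR]
          calc 3 * (m:ℤ) = ∑ _i : Fin m, (3:ℤ) := by
                rw [Finset.sum_const]; push_cast [Finset.card_univ, Fintype.card_fin]; ring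
            _ ≤ ∑ i, R i := Finset.sum_le_sum (fun i _ => le_trans hr (hi0 i (Finset.mem_univ i)))
        omega
    · -- c ≤ -2 : T ≥ 4m - 2 ≥ 3m
      have hmul : (1 - (m:ℤ)) * (-2) ≤ (1 - (m:ℤ)) * C j0 :=
        mul_le_mul_of_nonpos_left hc2 (by omega)
      have hT3m : 3 * (m:ℤ) ≤ ∑ i, ∑ j, g i j := by nlinarith [hsum1]
      omega
  · -- c ≥ 2 (c ≥ 1 and even)
    have hc2 : 2 ≤ C j0 := by omega
    have hT2n : 2 * (n:ℤ) ≤ ∑ i, ∑ j, g i j := by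
      rw [hT]
      calc 2 * (n:ℤ) = ∑ _j : Fin n, (2:ℤ) := by rw [Finset.sum_const]; push_cast [Finset.card_univ, Fintype.card_fin]; ring
        _ ≤ ∑ j, C j := Finset.sum_le_sum (fun j _ => le_trans hc2 (hj0 j (Finset.mem_univ j)))
    omega

abbrev emb {m n : ℕ} (p : Fin m × Fin n) : Sym2 (Fin m ⊕ Fin n) :=
  s(Sum.inl p.1, Sum.inr p.2)

lemma emb_inj {m n : ℕ} : Function.Injective (emb (m := m) (n := n)) := by
  rintro ⟨a, b⟩ ⟨c, d⟩ h
  simp only [emb, Sym2.eq_iff] at h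
  rcases h with ⟨h1, h2⟩ | ⟨h1, h2⟩ <;> simp_all

lemma mem_edgeFin {m n : ℕ} (e : Sym2 (Fin m ⊕ Fin n)) :
    e ∈ edgeFin (completeBipartiteGraph (Fin m) (Fin n)) ↔
      ∃ p : Fin m × Fin n, e = emb p := by
  unfold edgeFin
  rw [Finset.mem_filter]
  simp only [Finset.mem_univ, true_and]
  induction e using Sym2.ind with
  | _ u v =>
    rw [SimpleGraph.mem_edgeSet]
    cases u with
    | inl a =>
      cases v with
      | inl b =>
        simp only [completeBipartiteGraph_adj]
        constructor
        · rintro (⟨h1, h2⟩ | ⟨h1, h2⟩) <;> simp_all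
        · rintro ⟨p, hp⟩
          rw [Sym2.eq_iff] at hp
          rcases hp with ⟨h1, h2⟩ | ⟨h1, h2⟩ <;> simp_all
      | inr b =>
        simp only [completeBipartiteGraph_adj]
        constructor
        · intro _; exact ⟨(a, b), rfl⟩
        · intro _; simp
    | inr a =>
      cases v with
      | inl b =>
        simp only [completeBipartiteGraph_adj]
        constructor
        · intro _; exact ⟨(b, a), Sym2.eq_swap⟩
        · intro _; simp
      | inr b =>
        simp only [completeBipartiteGraph_adj]
        constructor
        · rintro (⟨h1, h2⟩ | ⟨h1, h2⟩) <;> simp_all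
        · rintro ⟨p, hp⟩
          rw [Sym2.eq_iff] at hp
          rcases hp with ⟨h1, h2⟩ | ⟨h1, h2⟩ <;> simp_all

lemma edgeFin_eq (m n : ℕ) :
    edgeFin (completeBipartiteGraph (Fin m) (Fin n)) = Finset.univ.image (emb (m := m) (n := n)) := by
  ext e
  rw [mem_edgeFin]
  simp [eq_comm]

lemma sum_edgeFin {m n : ℕ} (f : Sym2 (Fin m ⊕ Fin n) → ℤ) :
    ∑ e ∈ edgeFin (completeBipartiteGraph (Fin m) (Fin n)), f e
      = ∑ i : Fin m, ∑ j : Fin n, f (emb (i, j)) := by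
  rw [edgeFin_eq, Finset.sum_image (fun p _ q _ h => emb_inj h)]
  rw [Fintype.sum_prod_type]

lemma closedNbhd_eq {m n : ℕ} (i : Fin m) (j : Fin n) :
    closedNbhd (completeBipartiteGraph (Fin m) (Fin n)) (emb (i, j))
      = (Finset.univ.filter (fun p : Fin m × Fin n => p.1 = i ∨ p.2 = j)).image emb := by
  unfold closedNbhd
  ext e
  simp only [Finset.mem_filter, Finset.mem_image, Finset.mem_univ, true_and]
  constructor
  · rintro ⟨he, v, hv1, hv2⟩
    obtain ⟨p, rfl⟩ := (mem_edgeFin e).1 he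
    refine ⟨p, ?_, rfl⟩
    simp only [emb, Sym2.mem_iff] at hv1 hv2
    rcases hv1 with rfl | rfl <;> rcases hv2 with h | h <;> simp_all
  · rintro ⟨p, hp, rfl⟩
    refine ⟨(mem_edgeFin _).2 ⟨p, rfl⟩, ?_⟩
    rcases hp with h | h
    · exact ⟨Sum.inl p.1, by simp [emb, h], by simp [emb]⟩
    · exact ⟨Sum.inr p.2, by simp [emb, h], by simp [emb]⟩

lemma sum_closedNbhd {m n : ℕ} (f : Sym2 (Fin m ⊕ Fin n) → ℤ) (i : Fin m) (j : Fin n) :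
    ∑ e' ∈ closedNbhd (completeBipartiteGraph (Fin m) (Fin n)) (emb (i, j)), f e'
      = (∑ j' : Fin n, f (emb (i, j'))) + (∑ i' : Fin m, f (emb (i', j))) - f (emb (i, j)) := by
  rw [closedNbhd_eq, Finset.sum_image (fun p _ q _ h => emb_inj h)]
  set F : Fin m × Fin n → ℤ := fun p => f (emb p) with hF
  set s₁ := Finset.univ.filter (fun p : Fin m × Fin n => p.1 = i) with hs₁
  set s₂ := Finset.univ.filter (fun p : Fin m × Fin n => p.2 = j) with hs₂
  have hu : Finset.univ.filter (fun p : Fin m × Fin n => p.1 = i ∨ p.2 = j) = s₁ ∪ s₂ := by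
    rw [hs₁, hs₂, ← Finset.filter_or]
  have hinter : s₁ ∩ s₂ = {((i : Fin m), (j : Fin n))} := by
    ext p
    simp [hs₁, hs₂, Prod.ext_iff]
  have hkey := Finset.sum_union_inter (s₁ := s₁) (s₂ := s₂) (f := F)
  rw [hinter, Finset.sum_singleton] at hkey
  have h1 : ∑ p ∈ s₁, F p = ∑ j' : Fin n, f (emb (i, j')) := by
    rw [hs₁, Finset.sum_filter, Fintype.sum_prod_type]
    have : ∀ a ∈ (Finset.univ : Finset (Fin m)),
        (∑ b : Fin n, if a = i then F (a, b) else 0)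
          = if a = i then (∑ b : Fin n, F (a, b)) else 0 := by
      intro a _; split <;> simp
    rw [Finset.sum_congr rfl this, Finset.sum_ite_eq' Finset.univ i
      (fun a => ∑ b : Fin n, F (a, b))]
    simp [hF]
  have h2 : ∑ p ∈ s₂, F p = ∑ i' : Fin m, f (emb (i', j)) := by
    rw [hs₂, Finset.sum_filter, Fintype.sum_prod_type]
    have : ∀ a ∈ (Finset.univ : Finset (Fin m)),
        (∑ b : Fin n, if b = j then F (a, b) else 0) = F (a, j) := by
      intro a _
      rw [Finset.sum_ite_eq' Finset.univ j (fun b => F (a, b))]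
      simp
    rw [Finset.sum_congr rfl this]
  rw [hu, show f (emb (i, j)) = F (i, j) from rfl, ← h1, ← h2, eq_sub_iff_add_eq]
  exact hkey

theorem stmt15 (m n : ℕ) (hmn : m ≤ n) (hm : Even m) (hn : Odd n) :
    gammaS (completeBipartiteGraph (Fin m) (Fin n)) =
      min (3 * (m : ℤ)) (max (2 * (m : ℤ)) ((n : ℤ) + 1)) := by
  classical
  have hleast : IsLeast {z : ℤ | ∃ f, IsSEDF (completeBipartiteGraph (Fin m) (Fin n)) f ∧
      z = ∑ e ∈ edgeFin (completeBipartiteGraph (Fin m) (Fin n)), f e}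
      (min (3 * (m : ℤ)) (max (2 * (m : ℤ)) ((n : ℤ) + 1))) := by
    constructor
    · -- membership : an optimal SEDF exists
      rcases Nat.eq_zero_or_pos m with rfl | hm0
      · have hempty : edgeFin (completeBipartiteGraph (Fin 0) (Fin n)) = ∅ := by
          rw [edgeFin_eq]
          simp
        refine ⟨fun _ => 1, ⟨?_, ?_⟩, ?_⟩
        · intro e he; rw [hempty] at he; exact absurd he (Finset.notMem_empty e)
        · intro e he; rw [hempty] at he; exact absurd he (Finset.notMem_empty e)
        · rw [hempty]
          simp only [Finset.sum_empty]
          have h1 : (0:ℤ) ≤ (n:ℤ) + 1 := by positivity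
          rw [show (3 : ℤ) * ((0:ℕ):ℤ) = 0 by norm_num, show (2 : ℤ) * ((0:ℕ):ℤ) = 0 by norm_num]
          rw [max_eq_right h1, min_eq_left h1]
      · have hm_ne : m ≠ n := by
          rintro rfl
          rw [Nat.even_iff] at hm
          rw [Nat.odd_iff] at hn
          omega
        have hmn' : m < n := lt_of_le_of_ne hmn hm_ne
        obtain ⟨g0, hg1, hg2, hg3⟩ := upper_nat m n hmn' hm hn hm0
        set F : (Fin m ⊕ Fin n) → (Fin m ⊕ Fin n) → ℤ := fun u v =>
          match u, v with
          | Sum.inl i, Sum.inr j => g0 i j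
          | Sum.inr j, Sum.inl i => g0 i j
          | _, _ => 1 with hFdef
        have hFs : ∀ u v, F u v = F v u := by
          intro u v; cases u <;> cases v <;> rfl
        set f : Sym2 (Fin m ⊕ Fin n) → ℤ := Sym2.lift ⟨F, hFs⟩ with hfdef
        have hfe : ∀ (i : Fin m) (j : Fin n), f (emb (i, j)) = g0 i j := fun i j => rfl
        have hrow : ∀ i : Fin m, ∑ j' : Fin n, f (emb (i, j'))
            = ∑ j' ∈ Finset.range n, g0 i j' := by
          intro i
          rw [Finset.sum_congr rfl (fun j' _ => hfe i j')]
          exact Fin.sum_univ_eq_sum_range (fun j => g0 i j) n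
        have hcol : ∀ j : Fin n, ∑ i' : Fin m, f (emb (i', j))
            = ∑ i' ∈ Finset.range m, g0 i' j := by
          intro j
          rw [Finset.sum_congr rfl (fun i' _ => hfe i' j)]
          exact Fin.sum_univ_eq_sum_range (fun i => g0 i j) m
        refine ⟨f, ⟨?_, ?_⟩, ?_⟩
        · intro e he
          obtain ⟨p, rfl⟩ := (mem_edgeFin e).1 he
          obtain ⟨i, j⟩ := p
          rw [hfe i j]
          exact hg1 i i.isLt j j.isLt
        · intro e he
          obtain ⟨p, rfl⟩ := (mem_edgeFin e).1 he
          obtain ⟨i, j⟩ := p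
          rw [sum_closedNbhd f i j, hrow i, hcol j, hfe i j]
          have := hg2 i i.isLt j j.isLt
          omega
        · rw [sum_edgeFin f]
          rw [← hg3]
          rw [Finset.sum_congr rfl (fun i _ => hrow i)]
          exact (Fin.sum_univ_eq_sum_range (fun i => ∑ j' ∈ Finset.range n, g0 i j') m).symm
    · -- lower bound
      rintro z ⟨f, ⟨hf1, hf2⟩, rfl⟩
      rw [sum_edgeFin f]
      rcases Nat.eq_zero_or_pos m with rfl | hm0
      · simp only [Finset.univ_eq_empty, Finset.sum_empty]
        have h1 : (0:ℤ) ≤ (n:ℤ) + 1 := by positivity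
        rw [show (3 : ℤ) * ((0:ℕ):ℤ) = 0 by norm_num, show (2 : ℤ) * ((0:ℕ):ℤ) = 0 by norm_num]
        rw [max_eq_right h1, min_eq_left h1]
      · apply lower_fin m n hmn hm hn hm0 (fun i j => f (emb (i, j)))
        · intro i j
          exact hf1 (emb (i, j)) ((mem_edgeFin _).2 ⟨(i, j), rfl⟩)
        · intro i j
          have := hf2 (emb (i, j)) ((mem_edgeFin _).2 ⟨(i, j), rfl⟩)
          rw [sum_closedNbhd f i j] at this
          exact this
  unfold gammaS
  exact hleast.csInf_eq
end

section
/- There exists a 2-connected graph G on 10 vertices with γ'_s(G) = 0; namely, the L_(2,1)-graph consisting of a complete graph K_5 on V_1 together with 5 additional vertices each joined to V_1 by edges forming 2 disjoint perfect matchings (so each added vertex has degree 2 and each K_5-vertex gains degree 2). -/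
set_option maxHeartbeats 1000000

def EL : List (Fin 10 × Fin 10) := [(0,1),(0,2),(0,3),(0,4),(1,2),(1,3),(1,4),(2,3),(2,4),(3,4),(0,5),(1,5),(1,6),(2,6),(2,7),(3,7),(3,8),(4,8),(4,9),(0,9)]

def G10 : SimpleGraph (Fin 10) where
  Adj u v := (u,v) ∈ EL ∨ (v,u) ∈ EL
  symm := ⟨fun _ _ h => h.symm⟩
  loopless := ⟨fun u h => by revert h; revert u; decide⟩

instance : DecidableRel G10.Adj := fun _ _ => inferInstanceAs (Decidable (_ ∨ _))

def E20 : Finset (Sym2 (Fin 10)) := {s(0,1),s(0,2),s(0,3),s(0,4),s(1,2),s(1,3),s(1,4),s(2,3),s(2,4),s(3,4),s(0,5),s(1,5),s(1,6),s(2,6),s(2,7),s(3,7),s(3,8),s(4,8),s(4,9),s(0,9)}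

def f0 : Sym2 (Fin 10) → ℤ := fun e =>
  if e ∈ ({s(0,5),s(1,5),s(1,6),s(2,6),s(2,7),s(3,7),s(3,8),s(4,8),s(4,9),s(0,9)} : Finset (Sym2 (Fin 10))) then -1 else 1

lemma f0_pm : ∀ e ∈ E20, f0 e = 1 ∨ f0 e = -1 := by decide

lemma f0_cond : ∀ e ∈ E20, 1 ≤ ∑ e' ∈ E20.filter (fun e' => ∃ v, v ∈ e ∧ v ∈ e'), f0 e' := by
  decide

lemma f0_sum : ∑ e ∈ E20, f0 e = 0 := by decide

def hub (a : Fin 10) : Fin 10 := if a = 0 then 1 else 0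

lemma hub_ne : ∀ a : Fin 10, hub a ≠ a := by decide

lemma claimD : ∀ a v : Fin 10, v ≠ a →
    (v = hub a ∨ G10.Adj v (hub a) ∨ ∃ w, w ≠ a ∧ G10.Adj v w ∧ G10.Adj w (hub a)) := by
  decide

lemma claimD2 : ∀ a : Fin 10,
    (a = hub a ∨ G10.Adj a (hub a) ∨ ∃ w, G10.Adj a w ∧ G10.Adj w (hub a)) := by
  decide

def PP : Fin 2 → Finset (Fin 10) := ![{0,1,2,3,4},{5,6,7,8,9}]
lemma pp_cover : ∀ v : Fin 10, v ∈ PP 0 ∨ v ∈ PP 1 := by decide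
lemma pp_disj : ∀ v : Fin 10, v ∈ PP 0 → v ∈ PP 1 → False := by decide
lemma fin2 : ∀ j : Fin 2, j = 0 ∨ j = 1 := by decide
lemma L5 : ∀ v ∈ PP 1, ((PP 0).filter (G10.Adj v)).card = 2 := by decide
lemma L6 : ∀ v ∈ PP 0, ((PP 1).filter (G10.Adj v)).card = 2 := by decide
lemma Lcards : ∀ i : Fin 2, (PP i).card = 5 := by decide
lemma Lclique : ∀ u ∈ PP 0, ∀ v ∈ PP 0, u ≠ v → G10.Adj u v := by decide
lemma Lindep : ∀ u ∈ PP 1, ∀ v ∈ PP 1, ¬ G10.Adj u v := by decide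

open scoped Classical

lemma edgeFin_eq_s19 : edgeFin G10 = E20 := by
  ext e
  induction e using Sym2.ind with
  | _ x y =>
    simp only [edgeFin, Finset.mem_filter, Finset.mem_univ, true_and, SimpleGraph.mem_edgeSet]
    revert x y; decide

lemma closedNbhd_eq_s19 (e : Sym2 (Fin 10)) :
    closedNbhd G10 e = E20.filter (fun e' => ∃ v, v ∈ e ∧ v ∈ e') := by
  ext e'
  rw [closedNbhd]
  simp only [Finset.mem_filter, edgeFin_eq_s19]

lemma sedf_f0 : IsSEDF G10 f0 := by
  constructor
  · rw [edgeFin_eq_s19]; exact f0_pm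
  · rw [edgeFin_eq_s19]
    intro e he
    rw [closedNbhd_eq_s19]
    exact f0_cond e he

lemma sum_E20 (f : Sym2 (Fin 10) → ℤ) : ∑ e ∈ E20, f e =
    f s(0,1) + f s(0,2) + f s(0,3) + f s(0,4) + f s(1,2) + f s(1,3) + f s(1,4) +
    f s(2,3) + f s(2,4) + f s(3,4) + f s(0,5) + f s(1,5) + f s(1,6) + f s(2,6) +
    f s(2,7) + f s(3,7) + f s(3,8) + f s(4,8) + f s(4,9) + f s(0,9) := by
  rw [E20]
  repeat rw [Finset.sum_insert (by decide)]
  rw [Finset.sum_singleton]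
  ring

lemma nbhd0 : closedNbhd G10 s(0,5) = {s(0,1),s(0,2),s(0,3),s(0,4),s(0,5),s(0,9),s(1,5)} := by
  rw [closedNbhd_eq_s19]; decide
lemma nbhd1 : closedNbhd G10 s(1,6) = {s(0,1),s(1,2),s(1,3),s(1,4),s(1,5),s(1,6),s(2,6)} := by
  rw [closedNbhd_eq_s19]; decide
lemma nbhd2 : closedNbhd G10 s(2,7) = {s(0,2),s(1,2),s(2,3),s(2,4),s(2,6),s(2,7),s(3,7)} := by
  rw [closedNbhd_eq_s19]; decide
lemma nbhd3 : closedNbhd G10 s(3,8) = {s(0,3),s(1,3),s(2,3),s(3,4),s(3,7),s(3,8),s(4,8)} := by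
  rw [closedNbhd_eq_s19]; decide
lemma nbhd4 : closedNbhd G10 s(4,9) = {s(0,4),s(1,4),s(2,4),s(3,4),s(4,8),s(4,9),s(0,9)} := by
  rw [closedNbhd_eq_s19]; decide

lemma sumN0 (f : Sym2 (Fin 10) → ℤ) :
    ∑ e' ∈ ({s(0,1),s(0,2),s(0,3),s(0,4),s(0,5),s(0,9),s(1,5)} : Finset (Sym2 (Fin 10))), f e' =
    f s(0,1) + f s(0,2) + f s(0,3) + f s(0,4) + f s(0,5) + f s(0,9) + f s(1,5) := by
  repeat rw [Finset.sum_insert (by decide)]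
  rw [Finset.sum_singleton]; ring
lemma sumN1 (f : Sym2 (Fin 10) → ℤ) :
    ∑ e' ∈ ({s(0,1),s(1,2),s(1,3),s(1,4),s(1,5),s(1,6),s(2,6)} : Finset (Sym2 (Fin 10))), f e' =
    f s(0,1) + f s(1,2) + f s(1,3) + f s(1,4) + f s(1,5) + f s(1,6) + f s(2,6) := by
  repeat rw [Finset.sum_insert (by decide)]
  rw [Finset.sum_singleton]; ring
lemma sumN2 (f : Sym2 (Fin 10) → ℤ) :
    ∑ e' ∈ ({s(0,2),s(1,2),s(2,3),s(2,4),s(2,6),s(2,7),s(3,7)} : Finset (Sym2 (Fin 10))), f e' =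
    f s(0,2) + f s(1,2) + f s(2,3) + f s(2,4) + f s(2,6) + f s(2,7) + f s(3,7) := by
  repeat rw [Finset.sum_insert (by decide)]
  rw [Finset.sum_singleton]; ring
lemma sumN3 (f : Sym2 (Fin 10) → ℤ) :
    ∑ e' ∈ ({s(0,3),s(1,3),s(2,3),s(3,4),s(3,7),s(3,8),s(4,8)} : Finset (Sym2 (Fin 10))), f e' =
    f s(0,3) + f s(1,3) + f s(2,3) + f s(3,4) + f s(3,7) + f s(3,8) + f s(4,8) := by
  repeat rw [Finset.sum_insert (by decide)]
  rw [Finset.sum_singleton]; ring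
lemma sumN4 (f : Sym2 (Fin 10) → ℤ) :
    ∑ e' ∈ ({s(0,4),s(1,4),s(2,4),s(3,4),s(4,8),s(4,9),s(0,9)} : Finset (Sym2 (Fin 10))), f e' =
    f s(0,4) + f s(1,4) + f s(2,4) + f s(3,4) + f s(4,8) + f s(4,9) + f s(0,9) := by
  repeat rw [Finset.sum_insert (by decide)]
  rw [Finset.sum_singleton]; ring

lemma lower_bound (f : Sym2 (Fin 10) → ℤ) (hf : IsSEDF G10 f) :
    0 ≤ ∑ e ∈ edgeFin G10, f e := by
  obtain ⟨h1, h2⟩ := hf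
  rw [edgeFin_eq_s19] at h1 ⊢
  have hb : ∀ e ∈ E20, -1 ≤ f e := by
    intro e he; rcases h1 e he with h | h <;> omega
  have A0 := h2 s(0,5) (by rw [edgeFin_eq_s19]; decide)
  have A1 := h2 s(1,6) (by rw [edgeFin_eq_s19]; decide)
  have A2 := h2 s(2,7) (by rw [edgeFin_eq_s19]; decide)
  have A3 := h2 s(3,8) (by rw [edgeFin_eq_s19]; decide)
  have A4 := h2 s(4,9) (by rw [edgeFin_eq_s19]; decide)
  rw [nbhd0, sumN0] at A0
  rw [nbhd1, sumN1] at A1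
  rw [nbhd2, sumN2] at A2
  rw [nbhd3, sumN3] at A3
  rw [nbhd4, sumN4] at A4
  have B0 := hb s(0,5) (by decide)
  have B1 := hb s(1,6) (by decide)
  have B2 := hb s(2,7) (by decide)
  have B3 := hb s(3,8) (by decide)
  have B4 := hb s(4,9) (by decide)
  rw [sum_E20]
  linarith

lemma mconn : MConnected 2 G10 := by
  constructor
  · simp
  intro S hS
  have hcard : S.card ≤ 1 := by omega
  obtain ⟨a, ha⟩ : ∃ a : Fin 10, ∀ v ∈ S, v = a := by
    rcases Finset.card_le_one.mp hcard with h
    by_cases hne : S.Nonempty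
    · obtain ⟨x, hx⟩ := hne
      exact ⟨x, fun v hv => h v hv x hx⟩
    · exact ⟨0, fun v hv => absurd ⟨v, hv⟩ hne⟩
  set T : Set (Fin 10) := (↑S : Set (Fin 10))ᶜ with hT
  have hmemT : ∀ v : Fin 10, v ≠ a → v ∈ T := by
    intro v hv
    simp only [hT, Set.mem_compl_iff, Finset.mem_coe]
    intro hvS
    exact hv (ha v hvS)
  have hhub : hub a ∈ T := hmemT _ (hub_ne a)
  have key : ∀ (w : Fin 10) (hw : w ∈ T),
      (G10.induce T).Reachable ⟨w, hw⟩ ⟨hub a, hhub⟩ := by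
    intro w hw
    by_cases hwa : w = a
    · have haS : a ∉ S := by
        intro h
        exact (by simpa [hT] using hw : w ∉ S) (hwa ▸ h)
      have hall : ∀ v : Fin 10, v ∈ T := by
        intro v
        simp only [hT, Set.mem_compl_iff, Finset.mem_coe]
        intro hv
        exact haS ((ha v hv) ▸ hv)
      subst hwa
      rcases claimD2 w with h | h | ⟨x, h1, h2⟩
      · have he : (⟨w, hw⟩ : T) = ⟨hub w, hhub⟩ := Subtype.ext h
        rw [he]
      · exact SimpleGraph.Adj.reachable h
      · exact (SimpleGraph.Adj.reachable (u := (⟨w, hw⟩ : T)) (v := ⟨x, hall x⟩) h1).trans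
          (SimpleGraph.Adj.reachable h2)
    · rcases claimD a w hwa with h | h | ⟨x, hx, h1, h2⟩
      · have he : (⟨w, hw⟩ : T) = ⟨hub a, hhub⟩ := Subtype.ext h
        rw [he]
      · exact SimpleGraph.Adj.reachable h
      · exact (SimpleGraph.Adj.reachable (u := (⟨w, hw⟩ : T)) (v := ⟨x, hmemT x hx⟩) h1).trans
          (SimpleGraph.Adj.reachable h2)
  have : Nonempty T := ⟨⟨hub a, hhub⟩⟩
  constructor
  intro u v
  exact (key u.1 u.2).trans (key v.1 v.2).symm

lemma lgraph : IsLGraph 2 1 G10 := by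
  refine ⟨by simp, PP, ?_, Lcards, Lclique, ?_, ?_, ?_, ?_⟩
  · intro v
    rcases pp_cover v with h | h
    · exact ⟨0, h, fun j hj => by rcases fin2 j with rfl | rfl; exacts [rfl, (pp_disj v h hj).elim]⟩
    · exact ⟨1, h, fun j hj => by rcases fin2 j with rfl | rfl; exacts [(pp_disj v hj h).elim, rfl]⟩
  · intro i hi u hu v hv
    rcases fin2 i with rfl | rfl
    · exact absurd rfl hi
    · exact Lindep u hu v hv
  · intro i hi v hv
    rcases fin2 i with rfl | rfl
    · exact absurd rfl hi
    · convert L5 v hv using 2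
      exact Finset.filter_congr_decidable _ _ _
  · intro i hi v hv
    rcases fin2 i with rfl | rfl
    · exact absurd rfl hi
    · convert L6 v hv using 2
      exact Finset.filter_congr_decidable _ _ _
  · intro i j hi hj hij
    rcases fin2 i with rfl | rfl <;> rcases fin2 j with rfl | rfl <;> simp_all

theorem stmt19 :
    ∃ G : SimpleGraph (Fin 10), MConnected 2 G ∧ IsLGraph 2 1 G ∧ gammaS G = 0 := by
  refine ⟨G10, mconn, lgraph, ?_⟩
  have hmem : (0 : ℤ) ∈ {z : ℤ | ∃ f, IsSEDF G10 f ∧ z = ∑ e ∈ edgeFin G10, f e} :=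
    ⟨f0, sedf_f0, by rw [edgeFin_eq_s19, f0_sum]⟩
  have hlb : ∀ z ∈ {z : ℤ | ∃ f, IsSEDF G10 f ∧ z = ∑ e ∈ edgeFin G10, f e}, (0:ℤ) ≤ z := by
    rintro z ⟨f, hf, rfl⟩; exact lower_bound f hf
  rw [gammaS]
  exact le_antisymm (csInf_le ⟨0, hlb⟩ hmem) (le_csInf ⟨0, hmem⟩ hlb)
end
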